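/- Let λ be a partition, let c be the coatom of row i of P_λ, and let X_{{c}} = {x ∈ P_λ : x ≰ c′ for every coatom c′ ≠ c}. Then X_{{c}} is totally ordered by the rook poset order; it has exactly 2 elements if c arises from a switch move, and exactly λ_i − i + 1 elements (a chain of length λ_i − i) if c arises from a push move. -/

import Mathlib

namespace RookPoset

/-- A partition with `n` parts: `part i` is the (1-based) part `λ_{i+1}`.
The parts are weakly increasing and contain the staircase (`λ_i ≥ i`, 1-based),
which in particular makes them positive. -/
structure Partition (n : ℕ) where
  part : Fin n → ℕ
  mono : Monotone part
  staircase : ∀ i : Fin n, (i : ℕ) + 1 ≤ part i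

/-- The largest part; equals `λ_n` when `n > 0`. -/
def Partition.maxPart {n : ℕ} (lam : Partition n) : ℕ :=
  Finset.univ.sup lam.part

/-- The part `λ_k` in 1-based indexing, with the convention `λ_m = n + 1` for `m > n`. -/
def Partition.partAt {n : ℕ} (lam : Partition n) (k : ℕ) : ℕ :=
  if h : 1 ≤ k ∧ k ≤ n then lam.part ⟨k - 1, by omega⟩ else n + 1

/-- The GJW sequence `(λ_1 - 1, λ_2 - 2, …, λ_n - n)` of a partition. -/
def Partition.gjw {n : ℕ} (lam : Partition n) : List ℕ :=
  (List.finRange n).map fun i => lam.part i - ((i : ℕ) + 1)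

/-- A maximal rook placement on the Ferrers board of `lam`: `col i` is the (1-based)
column of the rook in the (1-based) row `i + 1` (rows indexed bottom-up). -/
structure Placement {n : ℕ} (lam : Partition n) where
  col : Fin n → ℕ
  inj : Function.Injective col
  pos : ∀ i, 1 ≤ col i
  le_part : ∀ i, col i ≤ lam.part i

/-- The increasingly sorted list of the values `x i` over indices `i` with `(i : ℕ) < j`,
i.e. the sorted initial segment `{x_1, …, x_j}` (1-based). -/
def initSeg {n : ℕ} (x : Fin n → ℕ) (j : ℕ) : List ℕ :=
  ((Finset.univ.filter fun i : Fin n => (i : ℕ) < j).image x).sort (· ≤ ·)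

/-- The rook poset order: `x ≤ y` iff each sorted initial segment of `x` is
componentwise at most the corresponding sorted initial segment of `y`. -/
def rle {n : ℕ} {lam : Partition n} (x y : Placement lam) : Prop :=
  ∀ j : ℕ, List.Forall₂ (· ≤ ·) (initSeg x.col j) (initSeg y.col j)

/-- `y` covers `x` in the rook poset. -/
def rcovers {n : ℕ} {lam : Partition n} (x y : Placement lam) : Prop :=
  rle x y ∧ x ≠ y ∧ ∀ z : Placement lam, rle x z → rle z y → z = x ∨ z = y

/-- `y` covers `x` in the subposet induced on `S`. -/
def rcoversIn {n : ℕ} {lam : Partition n} (S : Set (Placement lam)) (x y : Placement lam) :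
    Prop :=
  x ∈ S ∧ y ∈ S ∧ rle x y ∧ x ≠ y ∧ ∀ z ∈ S, rle x z → rle z y → z = x ∨ z = y

/-- `t` is the greedy placement `1̂`: for each row in turn (bottom-up), the rook is placed
in the largest column `≤ λ_i` not used by a lower row. -/
def IsGreedy {n : ℕ} {lam : Partition n} (t : Placement lam) : Prop :=
  ∀ i : Fin n, ∀ m : ℕ, 1 ≤ m → m ≤ lam.part i →
    (∀ k : Fin n, k < i → t.col k ≠ m) → m ≤ t.col i

/-- `x` is obtained from `y` by the switch move on the rooks in rows `i < k`:
the rectangle spanned by the rooks at `(i, y.col i)` and `(k, y.col k)` contains no other rook,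
and the two rooks exchange columns. -/
def SwitchMove {n : ℕ} {lam : Partition n} (y x : Placement lam) (i k : Fin n) : Prop :=
  i < k ∧ y.col k < y.col i ∧
  (∀ r : Fin n, i ≤ r → r ≤ k → y.col k ≤ y.col r → y.col r ≤ y.col i → r = i ∨ r = k) ∧
  x.col i = y.col k ∧ x.col k = y.col i ∧
  ∀ r : Fin n, r ≠ i → r ≠ k → x.col r = y.col r

/-- `x` is obtained from `y` by a push move on the rook in row `i`: the rook moves to an
empty column `c` to its left such that every column strictly between `c` and its old column
contains a rook in a row below row `i`. -/
def PushMove {n : ℕ} {lam : Partition n} (y x : Placement lam) (i : Fin n) : Prop :=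
  ∃ c : ℕ, 1 ≤ c ∧ c < y.col i ∧ (∀ r : Fin n, y.col r ≠ c) ∧
    (∀ d : ℕ, c < d → d < y.col i → ∃ r : Fin n, r < i ∧ y.col r = d) ∧
    x.col i = c ∧ ∀ r : Fin n, r ≠ i → x.col r = y.col r

/-- `x` is obtained from `y` by a single switch or push move on the rook in row `i`. -/
def MoveOnRow {n : ℕ} {lam : Partition n} (y x : Placement lam) (i : Fin n) : Prop :=
  (∃ k : Fin n, SwitchMove y x i k) ∨ PushMove y x i

/-- Two coatoms `c, c'` of the rook poset (with top element `t`) are entangled: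
there are two distinct elements each of which is covered by both `c` and `c'`
and lies below no other coatom. -/
def Entangled {n : ℕ} {lam : Partition n} (t c c' : Placement lam) : Prop :=
  ∃ z₁ z₂ : Placement lam, z₁ ≠ z₂ ∧
    (rcovers z₁ c ∧ rcovers z₁ c' ∧
      ∀ d : Placement lam, rcovers d t → d ≠ c → d ≠ c' → ¬ rle z₁ d) ∧
    (rcovers z₂ c ∧ rcovers z₂ c' ∧
      ∀ d : Placement lam, rcovers d t → d ≠ c → d ≠ c' → ¬ rle z₂ d)

/-- `X_I`: the set of elements of the rook poset lying below no coatom outside `I`. -/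
def Xset {n : ℕ} {lam : Partition n} (t : Placement lam) (I : Set (Placement lam)) :
    Set (Placement lam) :=
  {z : Placement lam | ∀ c' : Placement lam, rcovers c' t → c' ∉ I → ¬ rle z c'}

/-- The completed permutation `σ_x` of `{1, …, λ_n}` (as a function on 1-based positions):
position `i ≤ n` holds `x_i`, and the remaining positions hold the unused values in
increasing order (i.e. each subsequent position receives the smallest value not yet used). -/
def Placement.sigma {n : ℕ} {lam : Partition n} (x : Placement lam) : ℕ → ℕ := fun a =>
  if h : 1 ≤ a ∧ a ≤ n then x.col ⟨a - 1, by omega⟩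
  else ((Finset.Icc 1 lam.maxPart \ Finset.univ.image x.col).sort (· ≤ ·)).getD (a - n - 1) 0

/-- The rank `r(x)`: the number of inversions of the completed permutation `σ_x`. -/
def Placement.rank {n : ℕ} {lam : Partition n} (x : Placement lam) : ℕ :=
  ((Finset.Icc 1 lam.maxPart ×ˢ Finset.Icc 1 lam.maxPart).filter
    fun p => p.1 < p.2 ∧ x.sigma p.2 < x.sigma p.1).card

/-- Break a list after every entry equal to `1`. -/
def breakAfterOnes : List ℕ → List (List ℕ)
  | [] => []
  | a :: rest =>
    if a = 1 then [a] :: breakAfterOnes rest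
    else
      match breakAfterOnes rest with
      | [] => [[a]]
      | b :: bs => (a :: b) :: bs

/-- The multiset of blocks of a partition: break the GJW sequence after every entry
equal to `1` and delete all entries equal to `0` (discarding empty blocks). -/
def Partition.blocks {n : ℕ} (lam : Partition n) : Multiset (List ℕ) :=
  (((breakAfterOnes lam.gjw).map fun b => b.filter (· ≠ 0)).filter
    (· ≠ ([] : List ℕ)) : List (List ℕ))

/-- The conjugate of a block `b = (g_1, …, g_k)` ending in `1`: it is the GJW sequence of the
conjugate partition `ν'` of the partition `ν` with `ν_i = g_i + i`, where
`ν'_i = k + 2 - min {m | ν_m ≥ k + 2 - i}` with the convention `ν_{k+1} = k + 1`. -/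
noncomputable def conjBlock (b : List ℕ) : List ℕ :=
  let k := b.length
  let nu : ℕ → ℕ := fun m => if m ≤ k then b.getD (m - 1) 0 + m else k + 1
  (List.range k).map fun i0 =>
    let i := i0 + 1
    (k + 2 - sInf {m : ℕ | 1 ≤ m ∧ k + 2 - i ≤ nu m}) - i

/-- A block ends in `1`. -/
def endsInOne (b : List ℕ) : Prop := b.getLast? = some 1

/-- Two blocks are equivalent when they are equal, or one ends in `1` and the other is its
conjugate block. -/
def BlockEquiv (b b' : List ℕ) : Prop :=
  b = b' ∨ (endsInOne b ∧ b' = conjBlock b) ∨ (endsInOne b' ∧ b = conjBlock b')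

/-- Two partitions have matching block data: their multisets of blocks become equal after
replacing some blocks ending in `1` by their conjugate blocks. -/
def MatchingBlocks {n m : ℕ} (lam : Partition n) (mu : Partition m) : Prop :=
  Multiset.Rel BlockEquiv lam.blocks mu.blocks

/-- The rook posets of `lam` and `mu` are isomorphic as partially ordered sets. -/
def RookIso {n m : ℕ} (lam : Partition n) (mu : Partition m) : Prop :=
  ∃ e : Placement lam ≃ Placement mu, ∀ a b : Placement lam, rle a b ↔ rle (e a) (e b)

/-- A function `τ`, viewed as a permutation of `{1, …, N}`, is `312`-avoiding. -/
def Avoids312 (N : ℕ) (τ : ℕ → ℕ) : Prop :=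
  ∀ a b c : ℕ, 1 ≤ a → a < b → b < c → c ≤ N → ¬ (τ b < τ c ∧ τ c < τ a)

/-- A permutation of `Fin N` is `312`-avoiding. -/
def Avoids312P {N : ℕ} (τ : Equiv.Perm (Fin N)) : Prop :=
  ∀ a b c : Fin N, a < b → b < c → ¬ (τ b < τ c ∧ τ c < τ a)

/-- The Bruhat order on permutations, characterized by componentwise dominance of the
increasingly sorted initial segments. -/
def bruhatLE {N : ℕ} (σ τ : Equiv.Perm (Fin N)) : Prop :=
  ∀ j : ℕ, List.Forall₂ (· ≤ ·)
    (initSeg (fun a : Fin N => (σ a : ℕ)) j) (initSeg (fun a : Fin N => (τ a : ℕ)) j)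




open Finset

variable {n : ℕ} {lam : Partition n}

theorem Placement.ext' {x y : Placement lam} (h : x.col = y.col) : x = y := by
  cases x; cases y; simpa using h

/-- Counting function: number of rows `r < J` whose rook column is `≥ m`. -/
def cnt (x : Fin n → ℕ) (J m : ℕ) : ℕ :=
  (Finset.univ.filter fun r : Fin n => (r : ℕ) < J ∧ m ≤ x r).card

theorem sorted_forall2_iff : ∀ (l₁ l₂ : List ℕ), l₁.Pairwise (· ≤ ·) → l₂.Pairwise (· ≤ ·) →
    l₁.length = l₂.length →
    (List.Forall₂ (· ≤ ·) l₁ l₂ ↔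
      ∀ m, l₁.countP (fun a => decide (m ≤ a)) ≤ l₂.countP (fun a => decide (m ≤ a)))
  | [], [], _, _, _ => by simp
  | [], b :: l₂, _, _, h => by simp at h
  | a :: l₁, [], _, _, h => by simp at h
  | a :: l₁, b :: l₂, h₁, h₂, hlen => by
    rw [List.pairwise_cons] at h₁ h₂
    have hlen' : l₁.length = l₂.length := by simpa using hlen
    have ih := sorted_forall2_iff l₁ l₂ h₁.2 h₂.2 hlen'
    constructor
    · rintro h m
      rw [List.forall₂_cons] at h
      have h2 := (ih.mp h.2) m
      simp only [List.countP_cons, decide_eq_true_eq]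
      by_cases hma : m ≤ a
      · have hmb : m ≤ b := le_trans hma h.1
        simp [hma, hmb]; omega
      · simp [hma]; split <;> omega
    · intro h
      have hab : a ≤ b := by
        have := h a
        have hfull : l₁.countP (fun x => decide (a ≤ x)) = l₁.length :=
          List.countP_eq_length.mpr (fun x hx => by simpa using h₁.1 x hx)
        by_contra hba
        push_neg at hba
        have h2a : (b :: l₂).countP (fun x => decide (a ≤ x)) ≤ l₂.length := by
          rw [List.countP_cons]
          have : l₂.countP (fun x => decide (a ≤ x)) ≤ l₂.length := List.countP_le_length
          simp [Nat.not_le.mpr hba]; omega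
        rw [List.countP_cons] at this
        simp [le_refl, hfull] at this
        omega
      rw [List.forall₂_cons]
      refine ⟨hab, (ih.mpr ?_)⟩
      intro m
      have hm := h m
      rw [List.countP_cons, List.countP_cons] at hm
      by_cases hma : m ≤ a
      · have hmb : m ≤ b := le_trans hma hab
        simp [hma, hmb] at hm; omega
      · by_cases hmb : m ≤ b
        · have : l₂.countP (fun x => decide (m ≤ x)) = l₂.length :=
            List.countP_eq_length.mpr (fun x hx => by simp; exact le_trans hmb (h₂.1 x hx))
          have := List.countP_le_length (p := fun x => decide (m ≤ x)) (l := l₁)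
          omega
        · simp [hma, hmb] at hm; omega

theorem countP_initSeg (x : Fin n → ℕ) (hx : Function.Injective x) (J m : ℕ) :
    (initSeg x J).countP (fun a => decide (m ≤ a)) = cnt x J m := by
  classical
  unfold initSeg cnt
  set A : Finset ℕ := (Finset.univ.filter fun r : Fin n => (r : ℕ) < J).image x with hA
  have hperm : List.Perm (A.sort (· ≤ ·)) A.toList := Finset.sort_perm_toList _ _
  rw [hperm.countP_eq]
  have h1 : A.toList.countP (fun a => decide (m ≤ a)) = (A.filter fun a => m ≤ a).card := by
    rw [← Multiset.coe_countP, Finset.coe_toList]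
    rw [Multiset.countP_eq_card_filter]
    rfl
  rw [h1, hA]
  rw [Finset.filter_image]
  rw [Finset.card_image_of_injective _ hx]
  rw [Finset.filter_filter]

theorem length_initSeg (x : Fin n → ℕ) (hx : Function.Injective x) (J : ℕ) :
    (initSeg x J).length = (Finset.univ.filter fun r : Fin n => (r : ℕ) < J).card := by
  unfold initSeg
  rw [Finset.length_sort, Finset.card_image_of_injective _ hx]

theorem rle_iff_cnt (x y : Placement lam) :
    rle x y ↔ ∀ J m, cnt x.col J m ≤ cnt y.col J m := by
  unfold rle
  constructor
  · intro h J m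
    rw [← countP_initSeg x.col x.inj, ← countP_initSeg y.col y.inj]
    exact (sorted_forall2_iff (initSeg x.col J) (initSeg y.col J)
      (Finset.pairwise_sort _ _) (Finset.pairwise_sort _ _)
      (by rw [length_initSeg _ x.inj, length_initSeg _ y.inj])).mp (h J) m
  · intro h J
    refine (sorted_forall2_iff (initSeg x.col J) (initSeg y.col J)
      (Finset.pairwise_sort _ _) (Finset.pairwise_sort _ _)
      (by rw [length_initSeg _ x.inj, length_initSeg _ y.inj])).mpr ?_
    intro m
    rw [countP_initSeg x.col x.inj, countP_initSeg y.col y.inj]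
    exact h J m


theorem cnt_le_of_imp {x y : Fin n → ℕ} {J m : ℕ}
    (h : ∀ r : Fin n, (r : ℕ) < J → m ≤ x r → m ≤ y r) : cnt x J m ≤ cnt y J m := by
  apply Finset.card_le_card
  intro r hr
  simp only [Finset.mem_filter, Finset.mem_univ, true_and] at hr ⊢
  exact ⟨hr.1, h r hr.1 hr.2⟩

theorem cnt_congr {x y : Fin n → ℕ} {J m : ℕ}
    (h : ∀ r : Fin n, (r : ℕ) < J → (m ≤ x r ↔ m ≤ y r)) : cnt x J m = cnt y J m :=
  le_antisymm (cnt_le_of_imp fun r hr hm => (h r hr).mp hm)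
    (cnt_le_of_imp fun r hr hm => (h r hr).mpr hm)

theorem cnt_le_map {x y : Fin n → ℕ} {J m : ℕ} (φ : Equiv.Perm (Fin n))
    (h : ∀ r : Fin n, (r : ℕ) < J → m ≤ x r → ((φ r : ℕ) < J ∧ m ≤ y (φ r))) :
    cnt x J m ≤ cnt y J m := by
  apply Finset.card_le_card_of_injOn φ
  · intro r hr
    simp only [Finset.mem_coe, Finset.mem_filter, Finset.mem_univ, true_and] at hr ⊢
    exact h r hr.1 hr.2
  · exact fun a _ b _ hab => φ.injective hab

theorem cnt_lt_map {x y : Fin n → ℕ} {J m : ℕ} (φ : Equiv.Perm (Fin n)) (b : Fin n)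
    (hb1 : (b : ℕ) < J) (hb2 : m ≤ y b)
    (h : ∀ r : Fin n, (r : ℕ) < J → m ≤ x r → ((φ r : ℕ) < J ∧ m ≤ y (φ r) ∧ φ r ≠ b)) :
    cnt x J m < cnt y J m := by
  have hsub : (Finset.univ.filter fun r : Fin n => (r : ℕ) < J ∧ m ≤ x r).image φ ⊆
      (Finset.univ.filter fun r : Fin n => (r : ℕ) < J ∧ m ≤ y r).erase b := by
    intro s hs
    simp only [Finset.mem_image, Finset.mem_filter, Finset.mem_univ, true_and] at hs
    obtain ⟨r, hr, rfl⟩ := hs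
    obtain ⟨h1, h2, h3⟩ := h r hr.1 hr.2
    simp only [Finset.mem_erase, Finset.mem_filter, Finset.mem_univ, true_and]
    exact ⟨h3, h1, h2⟩
  have h1 : (Finset.univ.filter fun r : Fin n => (r : ℕ) < J ∧ m ≤ x r).card ≤
      ((Finset.univ.filter fun r : Fin n => (r : ℕ) < J ∧ m ≤ y r).erase b).card := by
    rw [← Finset.card_image_of_injective
      (Finset.univ.filter fun r : Fin n => (r : ℕ) < J ∧ m ≤ x r) φ.injective]
    exact Finset.card_le_card hsub
  have hbmem : b ∈ Finset.univ.filter fun r : Fin n => (r : ℕ) < J ∧ m ≤ y r := by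
    simp only [Finset.mem_filter, Finset.mem_univ, true_and]; exact ⟨hb1, hb2⟩
  have h2 := Finset.card_erase_of_mem hbmem
  have h3 := Finset.card_pos.mpr ⟨b, hbmem⟩
  show (Finset.univ.filter fun r : Fin n => (r : ℕ) < J ∧ m ≤ x r).card <
    (Finset.univ.filter fun r : Fin n => (r : ℕ) < J ∧ m ≤ y r).card
  omega

theorem cnt_split (x : Fin n → ℕ) {j J : ℕ} (m : ℕ) (h : j ≤ J) :
    cnt x J m = cnt x j m +
      (Finset.univ.filter fun r : Fin n => j ≤ (r : ℕ) ∧ (r : ℕ) < J ∧ m ≤ x r).card := by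
  unfold cnt
  rw [← Finset.card_union_of_disjoint]
  · congr 1
    ext r
    simp only [Finset.mem_filter, Finset.mem_univ, true_and, Finset.mem_union]
    constructor
    · rintro ⟨h1, h2⟩
      by_cases hj : (r : ℕ) < j
      · exact Or.inl ⟨hj, h2⟩
      · exact Or.inr ⟨by omega, h1, h2⟩
    · rintro (⟨h1, h2⟩ | ⟨h1, h2, h3⟩)
      · exact ⟨by omega, h2⟩
      · exact ⟨h2, h3⟩
  · rw [Finset.disjoint_left]
    intro r hr hr'
    simp only [Finset.mem_filter, Finset.mem_univ, true_and] at hr hr'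
    omega

theorem cnt_succ (x : Fin n → ℕ) (m : ℕ) (q : Fin n) :
    cnt x ((q : ℕ) + 1) m = cnt x q m + (if m ≤ x q then 1 else 0) := by
  rw [cnt_split x m (Nat.le_succ (q : ℕ))]
  congr 1
  have : (Finset.univ.filter fun r : Fin n => (q : ℕ) ≤ (r : ℕ) ∧ (r : ℕ) < (q : ℕ) + 1 ∧ m ≤ x r) =
      if m ≤ x q then {q} else ∅ := by
    split <;> rename_i hm
    · ext r
      simp only [Finset.mem_filter, Finset.mem_univ, true_and, Finset.mem_singleton]
      constructor
      · rintro ⟨h1, h2, h3⟩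
        exact Fin.ext (by omega)
      · rintro rfl
        exact ⟨le_refl _, by omega, hm⟩
    · ext r
      simp only [Finset.mem_filter, Finset.mem_univ, true_and, Finset.notMem_empty,
        iff_false, not_and]
      intro h1 h2
      have : r = q := Fin.ext (by omega)
      subst this
      exact fun h => hm h
  rw [this]
  split <;> simp

theorem rle_refl' (x : Placement lam) : rle x x :=
  (rle_iff_cnt x x).mpr fun _ _ => le_refl _

theorem rle_trans' {x y z : Placement lam} (h1 : rle x y) (h2 : rle y z) : rle x z :=
  (rle_iff_cnt x z).mpr fun J m =>
    le_trans ((rle_iff_cnt x y).mp h1 J m) ((rle_iff_cnt y z).mp h2 J m)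

theorem rle_antisymm {x y : Placement lam} (h1 : rle x y) (h2 : rle y x) : x = y := by
  have hcnt : ∀ J m, cnt x.col J m = cnt y.col J m := fun J m =>
    le_antisymm ((rle_iff_cnt x y).mp h1 J m) ((rle_iff_cnt y x).mp h2 J m)
  apply Placement.ext'
  funext r
  have key : ∀ m, (m ≤ x.col r ↔ m ≤ y.col r) := by
    intro m
    have e1 := cnt_succ x.col m r
    have e2 := cnt_succ y.col m r
    have e3 := hcnt ((r : ℕ) + 1) m
    have e4 := hcnt (r : ℕ) m
    rw [e1, e2, e4] at e3
    constructor <;> intro h <;> by_contra h' <;> simp [h, h'] at e3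
  have k1 := (key (x.col r)).mp (le_refl _)
  have k2 := (key (y.col r)).mpr (le_refl _)
  omega

section Greedy

variable {t : Placement lam}

theorem greedy_used (ht : IsGreedy t) (r : Fin n) {v : ℕ} (h1 : 1 ≤ v)
    (h2 : v ≤ lam.part r) (h3 : t.col r < v) : ∃ q, q < r ∧ t.col q = v := by
  by_contra h
  push_neg at h
  exact absurd (ht r v h1 h2 h) (by omega)

theorem cnt_le_greedy (ht : IsGreedy t) (x : Placement lam) (J m : ℕ) :
    cnt x.col J m ≤ cnt t.col J m := by
  rcases Nat.eq_zero_or_pos m with rfl | hm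
  · exact le_of_eq (cnt_congr fun r _ => by simp)
  by_cases hall : ∀ r : Fin n, (r : ℕ) < J → m ≤ t.col r
  · exact cnt_le_of_imp fun r hr _ => hall r hr
  · push_neg at hall
    obtain ⟨w, hw1, hw2⟩ := hall
    have hSne : (Finset.univ.filter (fun r : Fin n => (r : ℕ) < J ∧ t.col r < m)).Nonempty :=
      ⟨w, Finset.mem_filter.mpr ⟨Finset.mem_univ _, hw1, by omega⟩⟩
    obtain ⟨r₀, hr₀S, hr₀max⟩ := Finset.exists_max_image _ (fun r : Fin n => (r : ℕ)) hSne
    rw [Finset.mem_filter] at hr₀S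
    have hr₀mem : (r₀ : ℕ) < J ∧ t.col r₀ < m := hr₀S.2
    have hmax : ∀ r : Fin n, (r₀ : ℕ) < (r : ℕ) → (r : ℕ) < J → m ≤ t.col r := by
      intro r h1 h2
      by_contra h3
      have hrS : r ∈ Finset.univ.filter (fun r : Fin n => (r : ℕ) < J ∧ t.col r < m) :=
        Finset.mem_filter.mpr ⟨Finset.mem_univ _, h2, by omega⟩
      have := hr₀max r hrS
      omega
    have hkey : (Finset.univ.filter fun q : Fin n => (q : ℕ) < (r₀ : ℕ) + 1 ∧ m ≤ t.col q).card
        = (Finset.Icc m (lam.part r₀)).card := by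
      apply Finset.card_bij (fun q _ => t.col q)
      · intro q hq
        simp only [Finset.mem_filter, Finset.mem_univ, true_and] at hq
        simp only [Finset.mem_Icc]
        exact ⟨hq.2, le_trans (t.le_part q) (lam.mono (by rw [Fin.le_def]; omega))⟩
      · intro a _ b _ hab
        exact t.inj hab
      · intro v hv
        simp only [Finset.mem_Icc] at hv
        obtain ⟨q, hq1, hq2⟩ := greedy_used ht r₀ (le_trans hm hv.1) hv.2 (by omega)
        refine ⟨q, ?_, hq2⟩
        simp only [Finset.mem_filter, Finset.mem_univ, true_and]
        rw [Fin.lt_def] at hq1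
        constructor
        · omega
        · rw [hq2]; exact hv.1
    have hbnd : (Finset.univ.filter fun q : Fin n => (q : ℕ) < (r₀ : ℕ) + 1 ∧ m ≤ x.col q).card
        ≤ (Finset.Icc m (lam.part r₀)).card := by
      apply Finset.card_le_card_of_injOn (fun q => x.col q)
      · intro q hq
        simp only [Finset.mem_coe, Finset.mem_filter, Finset.mem_univ, true_and] at hq
        simp only [Finset.mem_coe, Finset.mem_Icc]
        exact ⟨hq.2, le_trans (x.le_part q) (lam.mono (by rw [Fin.le_def]; omega))⟩
      · intro a _ b _ hab
        exact x.inj hab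
    have hsplit1 := cnt_split x.col (j := (r₀ : ℕ) + 1) (J := J) m (by omega)
    have hsplit2 := cnt_split t.col (j := (r₀ : ℕ) + 1) (J := J) m (by omega)
    rw [hsplit1, hsplit2]
    have hmid : (Finset.univ.filter fun r : Fin n =>
          (r₀ : ℕ) + 1 ≤ (r : ℕ) ∧ (r : ℕ) < J ∧ m ≤ x.col r).card
        ≤ (Finset.univ.filter fun r : Fin n =>
          (r₀ : ℕ) + 1 ≤ (r : ℕ) ∧ (r : ℕ) < J ∧ m ≤ t.col r).card := by
      apply Finset.card_le_card
      intro r hr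
      simp only [Finset.mem_filter, Finset.mem_univ, true_and] at hr ⊢
      exact ⟨hr.1, hr.2.1, hmax r (by omega) hr.2.1⟩
    have h1 : cnt x.col ((r₀ : ℕ) + 1) m ≤ cnt t.col ((r₀ : ℕ) + 1) m := by
      unfold cnt
      rw [hkey]
      exact hbnd
    omega

end Greedy

/-! ### Canonical moves / coatoms -/

def freeCols (t : Placement lam) (j : Fin n) : Finset ℕ :=
  (Finset.Icc 1 (t.col j - 1)).filter fun v => ∀ q : Fin n, q < j → t.col q ≠ v

theorem mem_freeCols {t : Placement lam} {j : Fin n} {v : ℕ} :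
    v ∈ freeCols t j ↔ 1 ≤ v ∧ v < t.col j ∧ ∀ q : Fin n, q < j → t.col q ≠ v := by
  have := t.pos j
  simp only [freeCols, Finset.mem_filter, Finset.mem_Icc]
  constructor
  · rintro ⟨⟨h1, h2⟩, h3⟩; exact ⟨h1, by omega, h3⟩
  · rintro ⟨h1, h2, h3⟩; exact ⟨⟨h1, by omega⟩, h3⟩

def ofUpdate (t : Placement lam) (j : Fin n) (v : ℕ) (h1 : 1 ≤ v) (h2 : v ≤ lam.part j)
    (h3 : ∀ r, t.col r ≠ v) : Placement lam where
  col := Function.update t.col j v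
  inj := by
    intro a b hab
    by_cases ha : a = j <;> by_cases hb : b = j
    · rw [ha, hb]
    · rw [ha, Function.update_self, Function.update_of_ne hb] at hab
      exact absurd hab.symm (h3 b)
    · rw [hb, Function.update_self, Function.update_of_ne ha] at hab
      exact absurd hab (h3 a)
    · rw [Function.update_of_ne ha, Function.update_of_ne hb] at hab
      exact t.inj hab
  pos := by
    intro r
    by_cases h : r = j
    · subst h; rw [Function.update_self]; exact h1
    · rw [Function.update_of_ne h]; exact t.pos r
  le_part := by
    intro r
    by_cases h : r = j
    · subst h; rw [Function.update_self]; exact h2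
    · rw [Function.update_of_ne h]; exact t.le_part r

def ofSwap (t : Placement lam) (j k : Fin n) (hjk : j < k) (hlt : t.col k < t.col j) :
    Placement lam where
  col := fun r => t.col (Equiv.swap j k r)
  inj := fun a b hab => (Equiv.swap j k).injective (t.inj hab)
  pos := fun r => t.pos _
  le_part := by
    intro r
    show t.col (Equiv.swap j k r) ≤ lam.part r
    rcases eq_or_ne r j with rfl | hj
    · rw [Equiv.swap_apply_left]
      exact le_trans (le_of_lt hlt) (t.le_part r)
    rcases eq_or_ne r k with rfl | hk
    · rw [Equiv.swap_apply_right]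
      exact le_trans (t.le_part j) (lam.mono (le_of_lt hjk))
    · rw [Equiv.swap_apply_of_ne_of_ne hj hk]
      exact t.le_part r

theorem gfree_one_le (t : Placement lam) (j : Fin n) (H : (freeCols t j).Nonempty) :
    1 ≤ (freeCols t j).max' H :=
  (mem_freeCols.mp ((freeCols t j).max'_mem H)).1

theorem gfree_lt (t : Placement lam) (j : Fin n) (H : (freeCols t j).Nonempty) :
    (freeCols t j).max' H < t.col j :=
  (mem_freeCols.mp ((freeCols t j).max'_mem H)).2.1

theorem gfree_unused (t : Placement lam) (j : Fin n) (H : (freeCols t j).Nonempty) :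
    ∀ q : Fin n, q < j → t.col q ≠ (freeCols t j).max' H :=
  (mem_freeCols.mp ((freeCols t j).max'_mem H)).2.2

theorem gfree_max (t : Placement lam) (j : Fin n) (H : (freeCols t j).Nonempty) {v : ℕ}
    (h1 : 1 ≤ v) (h2 : v < t.col j) (h3 : ∀ q : Fin n, q < j → t.col q ≠ v) :
    v ≤ (freeCols t j).max' H :=
  (freeCols t j).le_max' v (mem_freeCols.mpr ⟨h1, h2, h3⟩)

theorem gfree_between (t : Placement lam) (j : Fin n) (H : (freeCols t j).Nonempty) :
    ∀ w, (freeCols t j).max' H < w → w < t.col j → ∃ q : Fin n, q < j ∧ t.col q = w := by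
  intro w hw1 hw2
  by_contra h
  push_neg at h
  have := gfree_max t j H (le_trans (gfree_one_le t j H) (le_of_lt hw1)) hw2
    (fun q hq => h q hq)
  omega

theorem dmove_kfact (t : Placement lam) (j : Fin n) (H : (freeCols t j).Nonempty)
    (hk : ∃ k : Fin n, t.col k = (freeCols t j).max' H) :
    j < Classical.choose hk := by
  have hkk := Classical.choose_spec hk
  have h1 := gfree_lt t j H
  have h2 := gfree_unused t j H
  rcases lt_trichotomy j (Classical.choose hk) with h | h | h
  · exact h
  · exfalso; rw [← h] at hkk; omega
  · exact absurd hkk (h2 _ h)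

noncomputable def dmove (t : Placement lam) (j : Fin n) (H : (freeCols t j).Nonempty) :
    Placement lam :=
  if hk : ∃ k : Fin n, t.col k = (freeCols t j).max' H then
    ofSwap t j (Classical.choose hk) (dmove_kfact t j H hk)
      (by rw [Classical.choose_spec hk]; exact gfree_lt t j H)
  else
    ofUpdate t j ((freeCols t j).max' H) (gfree_one_le t j H)
      (le_trans (le_of_lt (gfree_lt t j H)) (t.le_part j))
      (by push_neg at hk; exact fun r => hk r)

theorem dmove_cases (t : Placement lam) (j : Fin n) (H : (freeCols t j).Nonempty) :
    ((∀ r : Fin n, t.col r ≠ (freeCols t j).max' H) ∧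
      (dmove t j H).col j = (freeCols t j).max' H ∧
      (∀ r : Fin n, r ≠ j → (dmove t j H).col r = t.col r))
    ∨ (∃ k : Fin n, j < k ∧ t.col k = (freeCols t j).max' H ∧
      (dmove t j H).col j = (freeCols t j).max' H ∧ (dmove t j H).col k = t.col j ∧
      ∀ r : Fin n, r ≠ j → r ≠ k → (dmove t j H).col r = t.col r) := by
  unfold dmove
  split <;> rename_i hk
  · right
    have hkk := Classical.choose_spec hk
    refine ⟨Classical.choose hk, dmove_kfact t j H hk, hkk, ?_, ?_, ?_⟩
    · show t.col (Equiv.swap j (Classical.choose hk) j) = _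
      rw [Equiv.swap_apply_left, hkk]
    · show t.col (Equiv.swap j (Classical.choose hk) _) = _
      rw [Equiv.swap_apply_right]
    · intro r h1 h2
      show t.col (Equiv.swap j (Classical.choose hk) r) = _
      rw [Equiv.swap_apply_of_ne_of_ne h1 h2]
  · left
    push_neg at hk
    refine ⟨hk, ?_, ?_⟩
    · show Function.update t.col j _ j = _
      rw [Function.update_self]
    · intro r hr
      show Function.update t.col j _ r = _
      rw [Function.update_of_ne hr]

theorem dmove_agree_below (t : Placement lam) (j : Fin n) (H : (freeCols t j).Nonempty) :
    ∀ r : Fin n, r < j → (dmove t j H).col r = t.col r := by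
  intro r hr
  rcases dmove_cases t j H with ⟨_, _, h⟩ | ⟨k, hjk, _, _, _, h⟩
  · exact h r (ne_of_lt hr)
  · exact h r (ne_of_lt hr) (ne_of_lt (lt_trans hr hjk))

theorem dmove_col_j (t : Placement lam) (j : Fin n) (H : (freeCols t j).Nonempty) :
    (dmove t j H).col j = (freeCols t j).max' H := by
  rcases dmove_cases t j H with ⟨_, h, _⟩ | ⟨k, _, _, h, _, _⟩ <;> exact h

theorem dmove_ne (t : Placement lam) (j : Fin n) (H : (freeCols t j).Nonempty) :
    dmove t j H ≠ t := by
  intro h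
  have h2 := dmove_col_j t j H
  rw [h] at h2
  have := gfree_lt t j H
  omega

theorem spade_push {t : Placement lam} (ht : IsGreedy t) {j : Fin n} {g : ℕ} (hg1 : 1 ≤ g)
    (hg2 : g < t.col j)
    (hbet : ∀ w, g < w → w < t.col j → ∃ q : Fin n, q < j ∧ t.col q = w)
    (hempty : ∀ r : Fin n, t.col r ≠ g) :
    ∀ r : Fin n, j < r → t.col j < t.col r := by
  intro r hr
  rcases lt_trichotomy (t.col r) (t.col j) with h | h | h
  · exfalso
    rcases lt_trichotomy (t.col r) g with h2 | h2 | h2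
    · have hgr : g ≤ lam.part r := le_trans (le_of_lt hg2)
        (le_trans (t.le_part j) (lam.mono (le_of_lt hr)))
      obtain ⟨q, _, hq2⟩ := greedy_used ht r hg1 hgr h2
      exact hempty q hq2
    · exact hempty r h2
    · obtain ⟨q, hq1, hq2⟩ := hbet (t.col r) h2 h
      have hqr : q = r := t.inj hq2
      subst hqr
      exact absurd (lt_trans hq1 hr) (lt_irrefl _)
  · exact absurd (t.inj h) (ne_of_gt hr)
  · exact h

theorem spade_switch {t : Placement lam} (ht : IsGreedy t) {j k : Fin n} (hjk : j < k)
    (hlt : t.col k < t.col j)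
    (hbet : ∀ w, t.col k < w → w < t.col j → ∃ q : Fin n, q < j ∧ t.col q = w) :
    ∀ r : Fin n, j < r → r < k → t.col j < t.col r := by
  intro r hr1 hr2
  rcases lt_trichotomy (t.col r) (t.col j) with h | h | h
  · exfalso
    rcases lt_trichotomy (t.col r) (t.col k) with h2 | h2 | h2
    · have hk1 : 1 ≤ t.col k := t.pos k
      have hk2 : t.col k ≤ lam.part r := le_trans (le_of_lt hlt)
        (le_trans (t.le_part j) (lam.mono (le_of_lt hr1)))
      obtain ⟨q, hq1, hq2⟩ := greedy_used ht r hk1 hk2 h2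
      have hqk : q = k := t.inj hq2
      subst hqk
      exact absurd (lt_trans hq1 hr2) (lt_irrefl _)
    · have hrk : r = k := t.inj h2
      subst hrk
      exact absurd hr2 (lt_irrefl r)
    · obtain ⟨q, hq1, hq2⟩ := hbet (t.col r) h2 h
      have hqr : q = r := t.inj hq2
      subst hqr
      exact absurd (lt_trans hq1 hr1) (lt_irrefl _)
  · exact absurd (t.inj h) (ne_of_gt hr1)
  · exact h


theorem cnt_dmove_head {t : Placement lam} (j : Fin n) (H : (freeCols t j).Nonempty) (m : ℕ)
    (hm : (freeCols t j).max' H < m) :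
    cnt (dmove t j H).col ((j : ℕ) + 1) m = cnt t.col (j : ℕ) m := by
  rw [cnt_succ (dmove t j H).col m j, dmove_col_j t j H]
  rw [if_neg (by omega)]
  rw [add_zero]
  exact cnt_congr fun r hr => by
    rw [dmove_agree_below t j H r (by rw [Fin.lt_def]; omega)]

/-- The master dominance lemma: if `z` satisfies the head inequality in the window,
then `z ≤ dmove t j H` in the rook order. -/
theorem rle_dmove {t : Placement lam} (ht : IsGreedy t) (j : Fin n) (H : (freeCols t j).Nonempty)
    (z : Placement lam)
    (HW : ∀ m, (freeCols t j).max' H < m → m ≤ t.col j →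
      cnt z.col ((j : ℕ) + 1) m ≤ cnt t.col (j : ℕ) m) :
    rle z (dmove t j H) := by
  rw [rle_iff_cnt]
  intro J m
  have hB := cnt_le_greedy ht z J m
  rcases dmove_cases t j H with ⟨hempty, hdj, hdo⟩ | ⟨k, hjk, hkg, hdj, hdk, hdo⟩
  · -- push case
    have hspade : ∀ r : Fin n, j < r → t.col j < t.col r :=
      spade_push ht (gfree_one_le t j H) (gfree_lt t j H) (gfree_between t j H) hempty
    by_cases hwin : (j : ℕ) < J ∧ (freeCols t j).max' H < m ∧ m ≤ t.col j
    · obtain ⟨hw1, hw2, hw3⟩ := hwin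
      have hz := cnt_split z.col (j := (j : ℕ) + 1) (J := J) m (by omega)
      have htt := cnt_split t.col (j := (j : ℕ) + 1) (J := J) m (by omega)
      have hd := cnt_split (dmove t j H).col (j := (j : ℕ) + 1) (J := J) m (by omega)
      have htail_d : (Finset.univ.filter fun r : Fin n =>
            (j : ℕ) + 1 ≤ (r : ℕ) ∧ (r : ℕ) < J ∧ m ≤ (dmove t j H).col r) =
          (Finset.univ.filter fun r : Fin n => (j : ℕ) + 1 ≤ (r : ℕ) ∧ (r : ℕ) < J) := by
        apply Finset.filter_congr
        intro r _
        have : ∀ (h1 : (j:ℕ)+1 ≤ (r:ℕ)) (h2 : (r:ℕ) < J), m ≤ (dmove t j H).col r := by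
          intro h1 h2
          rw [hdo r (by intro h; subst h; omega)]
          exact le_trans hw3 (le_of_lt (hspade r (by rw [Fin.lt_def]; omega)))
        constructor
        · rintro ⟨h1, h2, _⟩; exact ⟨h1, h2⟩
        · rintro ⟨h1, h2⟩; exact ⟨h1, h2, this h1 h2⟩
      have htail_z : (Finset.univ.filter fun r : Fin n =>
            (j : ℕ) + 1 ≤ (r : ℕ) ∧ (r : ℕ) < J ∧ m ≤ z.col r).card ≤
          (Finset.univ.filter fun r : Fin n => (j : ℕ) + 1 ≤ (r : ℕ) ∧ (r : ℕ) < J).card := by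
        apply Finset.card_le_card
        intro r hr
        simp only [Finset.mem_filter, Finset.mem_univ, true_and] at hr ⊢
        exact ⟨hr.1, hr.2.1⟩
      have hhead_z := HW m hw2 hw3
      have hhead_d := cnt_dmove_head j H m hw2
      rw [hz, hd, htail_d, hhead_d]
      omega
    · have hde : cnt (dmove t j H).col J m = cnt t.col J m := by
        apply cnt_congr
        intro r hr
        by_cases hrj : r = j
        · subst hrj
          rw [hdj]
          push_neg at hwin
          have hglt := gfree_lt t r H
          rcases Nat.lt_or_ge ((freeCols t r).max' H) m with h2 | h2
          · have h3 := hwin hr h2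
            constructor <;> intro <;> omega
          · constructor <;> intro <;> omega
        · rw [hdo r hrj]
      rw [hde]; exact hB
  · -- switch case
    have hbet : ∀ w, t.col k < w → w < t.col j → ∃ q : Fin n, q < j ∧ t.col q = w := by
      rw [hkg]; exact gfree_between t j H
    have hspade : ∀ r : Fin n, j < r → r < k → t.col j < t.col r :=
      spade_switch ht hjk (by rw [hkg]; exact gfree_lt t j H) hbet
    have hcomp : ∀ r : Fin n, (dmove t j H).col r = t.col (Equiv.swap j k r) := by
      intro r
      rcases eq_or_ne r j with rfl | h1
      · rw [Equiv.swap_apply_left, hdj, hkg]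
      rcases eq_or_ne r k with rfl | h2
      · rw [Equiv.swap_apply_right, hdk]
      · rw [Equiv.swap_apply_of_ne_of_ne h1 h2, hdo r h1 h2]
    by_cases hJk : (k : ℕ) < J
    · -- beyond the window: swap bijection, cnt d = cnt t
      have h1 : cnt (dmove t j H).col J m = cnt t.col J m := by
        apply le_antisymm
        · apply cnt_le_map (Equiv.swap j k)
          intro r hr hm
          have hswlt : ((Equiv.swap j k r : Fin n) : ℕ) < J := by
            rcases eq_or_ne r j with rfl | e1
            · rw [Equiv.swap_apply_left]; omega
            rcases eq_or_ne r k with rfl | e2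
            · rw [Equiv.swap_apply_right]; rw [Fin.lt_def] at hjk; omega
            · rw [Equiv.swap_apply_of_ne_of_ne e1 e2]; exact hr
          exact ⟨hswlt, by rw [← hcomp r]; exact hm⟩
        · apply cnt_le_map (Equiv.swap j k)
          intro r hr hm
          have hswlt : ((Equiv.swap j k r : Fin n) : ℕ) < J := by
            rcases eq_or_ne r j with rfl | e1
            · rw [Equiv.swap_apply_left]; omega
            rcases eq_or_ne r k with rfl | e2
            · rw [Equiv.swap_apply_right]; rw [Fin.lt_def] at hjk; omega
            · rw [Equiv.swap_apply_of_ne_of_ne e1 e2]; exact hr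
          refine ⟨hswlt, ?_⟩
          rw [hcomp (Equiv.swap j k r), Equiv.swap_apply_self]
          exact hm
      rw [h1]; exact hB
    · by_cases hwin : (j : ℕ) < J ∧ (freeCols t j).max' H < m ∧ m ≤ t.col j
      · obtain ⟨hw1, hw2, hw3⟩ := hwin
        have hz := cnt_split z.col (j := (j : ℕ) + 1) (J := J) m (by omega)
        have hd := cnt_split (dmove t j H).col (j := (j : ℕ) + 1) (J := J) m (by omega)
        have htail_d : (Finset.univ.filter fun r : Fin n =>
              (j : ℕ) + 1 ≤ (r : ℕ) ∧ (r : ℕ) < J ∧ m ≤ (dmove t j H).col r) =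
            (Finset.univ.filter fun r : Fin n => (j : ℕ) + 1 ≤ (r : ℕ) ∧ (r : ℕ) < J) := by
          apply Finset.filter_congr
          intro r _
          have hmr : ∀ (h1 : (j:ℕ)+1 ≤ (r:ℕ)) (h2 : (r:ℕ) < J), m ≤ (dmove t j H).col r := by
            intro h1 h2
            have hrk : r ≠ k := by intro h; subst h; omega
            rw [hdo r (by intro h; subst h; omega) hrk]
            refine le_trans hw3 (le_of_lt (hspade r (by rw [Fin.lt_def]; omega) ?_))
            rw [Fin.lt_def]
            rcases Nat.lt_or_ge (r : ℕ) (k : ℕ) with h | h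
            · exact h
            · exfalso
              rcases Nat.eq_or_lt_of_le h with h' | h'
              · exact hrk (Fin.ext h'.symm)
              · omega
          constructor
          · rintro ⟨h1, h2, _⟩; exact ⟨h1, h2⟩
          · rintro ⟨h1, h2⟩; exact ⟨h1, h2, hmr h1 h2⟩
        have htail_z : (Finset.univ.filter fun r : Fin n =>
              (j : ℕ) + 1 ≤ (r : ℕ) ∧ (r : ℕ) < J ∧ m ≤ z.col r).card ≤
            (Finset.univ.filter fun r : Fin n => (j : ℕ) + 1 ≤ (r : ℕ) ∧ (r : ℕ) < J).card := by
          apply Finset.card_le_card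
          intro r hr
          simp only [Finset.mem_filter, Finset.mem_univ, true_and] at hr ⊢
          exact ⟨hr.1, hr.2.1⟩
        have hhead_z := HW m hw2 hw3
        have hhead_d := cnt_dmove_head j H m hw2
        rw [hz, hd, htail_d, hhead_d]
        omega
      · have hde : cnt (dmove t j H).col J m = cnt t.col J m := by
          apply cnt_congr
          intro r hr
          by_cases hrj : r = j
          · subst hrj
            rw [hdj]
            push_neg at hwin
            have hglt := gfree_lt t r H
            rcases Nat.lt_or_ge ((freeCols t r).max' H) m with h2 | h2
            · have h3 := hwin hr h2
              constructor <;> intro <;> omega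
            · constructor <;> intro <;> omega
          · have hrk : r ≠ k := by
              intro h
              subst h
              rw [Fin.lt_def] at hjk
              omega
            rw [hdo r hrj hrk]
        rw [hde]; exact hB

theorem dmove_wit {t : Placement lam} (j : Fin n) (H : (freeCols t j).Nonempty) :
    cnt (dmove t j H).col ((j : ℕ) + 1) (t.col j) < cnt t.col ((j : ℕ) + 1) (t.col j) := by
  have h1 := cnt_dmove_head j H (t.col j) (gfree_lt t j H)
  have h2 := cnt_succ t.col (t.col j) j
  rw [if_pos (le_refl _)] at h2
  omega

theorem not_rle_dmove {t : Placement lam} (j : Fin n) (H : (freeCols t j).Nonempty)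
    (w : Placement lam)
    (hwit : cnt w.col ((j : ℕ) + 1) (t.col j) = cnt t.col ((j : ℕ) + 1) (t.col j)) :
    ¬ rle w (dmove t j H) := by
  intro h
  have h1 := (rle_iff_cnt w (dmove t j H)).mp h ((j : ℕ) + 1) (t.col j)
  have h2 := dmove_wit j H
  omega

theorem firstdiff_lt {t : Placement lam} (ht : IsGreedy t) (x : Placement lam) (j : Fin n)
    (hagree : ∀ r : Fin n, r < j → x.col r = t.col r) (hne : x.col j ≠ t.col j) :
    x.col j < t.col j := by
  rcases Nat.lt_or_ge (x.col j) (t.col j) with h | h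
  · exact h
  · exfalso
    have hlt : t.col j < x.col j := by omega
    obtain ⟨q, hq1, hq2⟩ := greedy_used ht j (x.pos j) (x.le_part j) hlt
    have : x.col q = x.col j := by rw [hagree q hq1, hq2]
    have := x.inj this
    subst this
    exact absurd hq1 (lt_irrefl _)

theorem firstdiff_free {t : Placement lam} (ht : IsGreedy t) (x : Placement lam) (j : Fin n)
    (hagree : ∀ r : Fin n, r < j → x.col r = t.col r) (hne : x.col j ≠ t.col j) :
    x.col j ∈ freeCols t j := by
  rw [mem_freeCols]
  refine ⟨x.pos j, firstdiff_lt ht x j hagree hne, ?_⟩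
  intro q hq h
  have : x.col q = x.col j := by rw [hagree q hq, h]
  have := x.inj this
  subst this
  exact absurd hq (lt_irrefl _)

theorem rle_dmove_of_firstdiff {t : Placement lam} (ht : IsGreedy t) (x : Placement lam)
    (j : Fin n) (H : (freeCols t j).Nonempty)
    (hagree : ∀ r : Fin n, r < j → x.col r = t.col r) (hne : x.col j ≠ t.col j) :
    rle x (dmove t j H) := by
  apply rle_dmove ht j H
  intro m hm1 hm2
  have hxg : x.col j ≤ (freeCols t j).max' H :=
    (freeCols t j).le_max' _ (firstdiff_free ht x j hagree hne)
  rw [cnt_succ x.col m j, if_neg (by omega), add_zero]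
  exact le_of_eq (cnt_congr fun r hr => by rw [hagree r (by rw [Fin.lt_def]; omega)])

theorem firstdiff_exists {t : Placement lam} (x : Placement lam) (hx : x ≠ t) :
    ∃ j : Fin n, x.col j ≠ t.col j ∧ ∀ r : Fin n, r < j → x.col r = t.col r := by
  have hne : (Finset.univ.filter fun r : Fin n => x.col r ≠ t.col r).Nonempty := by
    by_contra h
    rw [Finset.not_nonempty_iff_eq_empty] at h
    apply hx
    apply Placement.ext'
    funext r
    by_contra hr
    have : r ∈ Finset.univ.filter fun r : Fin n => x.col r ≠ t.col r := by
      simp only [Finset.mem_filter, Finset.mem_univ, true_and]; exact hr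
    rw [h] at this
    exact absurd this (Finset.notMem_empty r)
  obtain ⟨j, hjS, hjmin⟩ := Finset.exists_min_image _ (fun r : Fin n => (r : ℕ)) hne
  rw [Finset.mem_filter] at hjS
  refine ⟨j, hjS.2, ?_⟩
  intro r hr
  by_contra h
  have hrS : r ∈ Finset.univ.filter fun r : Fin n => x.col r ≠ t.col r := by
    simp only [Finset.mem_filter, Finset.mem_univ, true_and]; exact h
  have := hjmin r hrS
  rw [Fin.lt_def] at hr
  omega

theorem cnt_swap_eq {x y : Placement lam} {j k : Fin n}
    (hcomp : ∀ r, x.col r = y.col (Equiv.swap j k r)) {J m : ℕ}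
    (hjJ : (j : ℕ) < J) (hkJ : (k : ℕ) < J) : cnt x.col J m = cnt y.col J m := by
  have hsw : ∀ r : Fin n, (r : ℕ) < J → ((Equiv.swap j k r : Fin n) : ℕ) < J := by
    intro r hr
    rcases eq_or_ne r j with rfl | e1
    · rw [Equiv.swap_apply_left]; exact hkJ
    rcases eq_or_ne r k with rfl | e2
    · rw [Equiv.swap_apply_right]; exact hjJ
    · rw [Equiv.swap_apply_of_ne_of_ne e1 e2]; exact hr
  apply le_antisymm
  · apply cnt_le_map (Equiv.swap j k)
    intro r hr hm
    exact ⟨hsw r hr, by rw [← hcomp r]; exact hm⟩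
  · apply cnt_le_map (Equiv.swap j k)
    intro r hr hm
    refine ⟨hsw r hr, ?_⟩
    rw [hcomp (Equiv.swap j k r), Equiv.swap_apply_self]
    exact hm

theorem dmove_comp_swap {t : Placement lam} {j : Fin n} {H : (freeCols t j).Nonempty}
    {k : Fin n} (hkg : t.col k = (freeCols t j).max' H)
    (hdj : (dmove t j H).col j = (freeCols t j).max' H)
    (hdk : (dmove t j H).col k = t.col j)
    (hdo : ∀ r : Fin n, r ≠ j → r ≠ k → (dmove t j H).col r = t.col r) :
    ∀ r, (dmove t j H).col r = t.col (Equiv.swap j k r) := by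
  intro r
  rcases eq_or_ne r j with rfl | h1
  · rw [Equiv.swap_apply_left, hdj, hkg]
  rcases eq_or_ne r k with rfl | h2
  · rw [Equiv.swap_apply_right, hdk]
  · rw [Equiv.swap_apply_of_ne_of_ne h1 h2, hdo r h1 h2]

theorem cnt_dmove_other {t : Placement lam} (ht : IsGreedy t) {j j' : Fin n}
    (H : (freeCols t j).Nonempty) (hne : j ≠ j') :
    cnt (dmove t j H).col ((j' : ℕ) + 1) (t.col j') = cnt t.col ((j' : ℕ) + 1) (t.col j') := by
  rcases dmove_cases t j H with ⟨hempty, hdj, hdo⟩ | ⟨k, hjk, hkg, hdj, hdk, hdo⟩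
  · apply cnt_congr
    intro r hr
    by_cases hrj : r = j
    · rw [hrj, hdj]
      rw [hrj] at hr
      have hjj' : j < j' := by
        rw [Fin.lt_def]
        have : j ≠ j' := hne
        have h2 : (j : ℕ) ≠ (j' : ℕ) := fun h => this (Fin.ext h)
        omega
      have hsp := spade_push ht (gfree_one_le t j H) (gfree_lt t j H)
        (gfree_between t j H) hempty j' hjj'
      have hg := gfree_lt t j H
      constructor <;> intro <;> omega
    · rw [hdo r hrj]
  · by_cases hkJ : (k : ℕ) < (j' : ℕ) + 1
    · exact cnt_swap_eq (dmove_comp_swap hkg hdj hdk hdo)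
        (by rw [Fin.lt_def] at hjk; omega) hkJ
    · apply cnt_congr
      intro r hr
      have hrk : r ≠ k := by
        intro h; subst h; omega
      by_cases hrj : r = j
      · rw [hrj, hdj]
        rw [hrj] at hr
        have hjj' : j < j' := by
          rw [Fin.lt_def]
          have h2 : (j : ℕ) ≠ (j' : ℕ) := fun h => hne (Fin.ext h)
          omega
        have hj'k : j' < k := by
          rw [Fin.lt_def]; omega
        have hbet : ∀ w, t.col k < w → w < t.col j → ∃ q : Fin n, q < j ∧ t.col q = w := by
          rw [hkg]; exact gfree_between t j H
        have hsp := spade_switch ht hjk (by rw [hkg]; exact gfree_lt t j H) hbet j' hjj' hj'k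
        have hg := gfree_lt t j H
        constructor <;> intro <;> omega
      · rw [hdo r hrj hrk]

theorem not_rle_dmove_dmove {t : Placement lam} (ht : IsGreedy t) {j j' : Fin n}
    (H : (freeCols t j).Nonempty) (H' : (freeCols t j').Nonempty) (hne : j ≠ j') :
    ¬ rle (dmove t j H) (dmove t j' H') :=
  not_rle_dmove j' H' _ (cnt_dmove_other ht H hne)

theorem rle_top {t : Placement lam} (ht : IsGreedy t) (x : Placement lam) : rle x t :=
  (rle_iff_cnt x t).mpr (cnt_le_greedy ht x)

theorem dmove_coatom {t : Placement lam} (ht : IsGreedy t) (j : Fin n)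
    (H : (freeCols t j).Nonempty) : rcovers (dmove t j H) t := by
  refine ⟨rle_top ht _, dmove_ne t j H, ?_⟩
  intro w h1 h2
  by_cases hw : w = t
  · right; exact hw
  obtain ⟨j'', hne'', hagree''⟩ := firstdiff_exists w hw
  have H'' : (freeCols t j'').Nonempty := ⟨w.col j'', firstdiff_free ht w j'' hagree'' hne''⟩
  have hwd : rle w (dmove t j'' H'') := rle_dmove_of_firstdiff ht w j'' H'' hagree'' hne''
  by_cases hjj : j'' = j
  · subst hjj
    left
    exact rle_antisymm hwd h1
  · exact absurd (rle_trans' h1 hwd) (not_rle_dmove_dmove ht H H'' (fun h => hjj h.symm))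

theorem coatom_eq_dmove {t : Placement lam} (ht : IsGreedy t) {c' : Placement lam}
    (hc' : rcovers c' t) :
    ∃ (j : Fin n) (H : (freeCols t j).Nonempty), c' = dmove t j H ∧ c'.col j ≠ t.col j ∧
      ∀ r : Fin n, r < j → c'.col r = t.col r := by
  obtain ⟨j, hne, hagree⟩ := firstdiff_exists c' hc'.2.1
  have H : (freeCols t j).Nonempty := ⟨c'.col j, firstdiff_free ht c' j hagree hne⟩
  have hrle : rle c' (dmove t j H) := rle_dmove_of_firstdiff ht c' j H hagree hne
  rcases hc'.2.2 (dmove t j H) hrle (rle_top ht _) with h | h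
  · exact ⟨j, H, h.symm, hne, hagree⟩
  · exact absurd h (dmove_ne t j H)

theorem cnt_le_map₂ {x y : Fin n → ℕ} {J J' m : ℕ} (φ : Equiv.Perm (Fin n))
    (h : ∀ r : Fin n, (r : ℕ) < J → m ≤ x r → ((φ r : ℕ) < J' ∧ m ≤ y (φ r))) :
    cnt x J m ≤ cnt y J' m := by
  apply Finset.card_le_card_of_injOn φ
  · intro r hr
    simp only [Finset.mem_coe, Finset.mem_filter, Finset.mem_univ, true_and] at hr ⊢
    exact h r hr.1 hr.2
  · exact fun a _ b _ hab => φ.injective hab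

def ofUpdate' (t : Placement lam) (j : Fin n) (v : ℕ) (h1 : 1 ≤ v) (h2 : v ≤ lam.part j)
    (h3 : ∀ r, r ≠ j → t.col r ≠ v) : Placement lam where
  col := Function.update t.col j v
  inj := by
    intro a b hab
    by_cases ha : a = j <;> by_cases hb : b = j
    · rw [ha, hb]
    · rw [ha, Function.update_self, Function.update_of_ne hb] at hab
      exact absurd hab.symm (h3 b hb)
    · rw [hb, Function.update_self, Function.update_of_ne ha] at hab
      exact absurd hab (h3 a ha)
    · rw [Function.update_of_ne ha, Function.update_of_ne hb] at hab
      exact t.inj hab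
  pos := by
    intro r
    by_cases h : r = j
    · subst h; rw [Function.update_self]; exact h1
    · rw [Function.update_of_ne h]; exact t.pos r
  le_part := by
    intro r
    by_cases h : r = j
    · subst h; rw [Function.update_self]; exact h2
    · rw [Function.update_of_ne h]; exact t.le_part r

/-- Columns at which row `i` may sit with all other rows of `t` fixed. -/
def Ucols (t : Placement lam) (i : Fin n) : Finset ℕ :=
  (Finset.Icc 1 (lam.part i)).filter fun v => ∀ r : Fin n, r ≠ i → t.col r ≠ v

theorem mem_Ucols {t : Placement lam} {i : Fin n} {v : ℕ} :
    v ∈ Ucols t i ↔ 1 ≤ v ∧ v ≤ lam.part i ∧ ∀ r : Fin n, r ≠ i → t.col r ≠ v := by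
  simp only [Ucols, Finset.mem_filter, Finset.mem_Icc]
  tauto

noncomputable def rowVar (t : Placement lam) (i : Fin n) (v : ℕ) : Placement lam :=
  if h : v ∈ Ucols t i then
    ofUpdate' t i v (mem_Ucols.mp h).1 (mem_Ucols.mp h).2.1 (mem_Ucols.mp h).2.2
  else t

theorem rowVar_col {t : Placement lam} {i : Fin n} {v : ℕ} (h : v ∈ Ucols t i) :
    (rowVar t i v).col i = v ∧ ∀ r : Fin n, r ≠ i → (rowVar t i v).col r = t.col r := by
  unfold rowVar
  rw [dif_pos h]
  constructor
  · show Function.update t.col i v i = v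
    rw [Function.update_self]
  · intro r hr
    show Function.update t.col i v r = t.col r
    rw [Function.update_of_ne hr]

theorem col_mem_Ucols (t : Placement lam) (i : Fin n) : t.col i ∈ Ucols t i :=
  mem_Ucols.mpr ⟨t.pos i, t.le_part i, fun r hr h => hr (t.inj h)⟩

theorem rowVar_self (t : Placement lam) (i : Fin n) : rowVar t i (t.col i) = t := by
  apply Placement.ext'
  funext r
  obtain ⟨h1, h2⟩ := rowVar_col (col_mem_Ucols t i)
  by_cases hr : r = i
  · rw [hr, h1]
  · rw [h2 r hr]

section PushFacts

variable {t c : Placement lam} {i : Fin n}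

theorem push_data (hp : PushMove t c i) :
    ∃ c₀ : ℕ, 1 ≤ c₀ ∧ c₀ < t.col i ∧ (∀ r : Fin n, t.col r ≠ c₀) ∧
      (∀ d : ℕ, c₀ < d → d < t.col i → ∃ r : Fin n, r < i ∧ t.col r = d) ∧
      c.col i = c₀ ∧ ∀ r : Fin n, r ≠ i → c.col r = t.col r := hp

theorem push_H (hp : PushMove t c i) : (freeCols t i).Nonempty := by
  obtain ⟨c₀, h1, h2, h3, _, _, _⟩ := hp
  exact ⟨c₀, mem_freeCols.mpr ⟨h1, h2, fun q _ => h3 q⟩⟩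

theorem push_g (hp : PushMove t c i) (H : (freeCols t i).Nonempty) :
    (freeCols t i).max' H = c.col i := by
  obtain ⟨c₀, h1, h2, h3, h4, h5, _⟩ := hp
  rw [h5]
  apply le_antisymm
  · by_contra hgt
    push_neg at hgt
    obtain ⟨r, hr, hrg⟩ := h4 _ hgt (gfree_lt t i H)
    exact gfree_unused t i H r hr hrg
  · exact gfree_max t i H h1 h2 fun q _ => h3 q

theorem push_spade (ht : IsGreedy t) (hp : PushMove t c i) :
    ∀ r : Fin n, i < r → t.col i < t.col r := by
  obtain ⟨c₀, h1, h2, h3, h4, h5, h6⟩ := hp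
  exact spade_push ht h1 h2 (fun w hw1 hw2 => (h4 w hw1 hw2).imp fun r hr => hr) h3

theorem push_ci_lt (hp : PushMove t c i) : c.col i < t.col i := by
  obtain ⟨c₀, _, h2, _, _, h5, _⟩ := hp
  omega

theorem push_dmove_eq (hp : PushMove t c i) (H : (freeCols t i).Nonempty) :
    dmove t i H = c := by
  have hg0 := push_g hp H
  obtain ⟨c₀, h1, h2, h3, h4, h5, h6⟩ := hp
  have hg : (freeCols t i).max' H = c₀ := by rw [hg0, h5]
  rcases dmove_cases t i H with ⟨hempty, hdj, hdo⟩ | ⟨k, hjk, hkg, _, _, _⟩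
  · apply Placement.ext'
    funext r
    by_cases hr : r = i
    · rw [hr, hdj, hg, h5]
    · rw [hdo r hr, (h6 r hr).symm]
  · exfalso
    rw [hg] at hkg
    exact h3 k hkg

end PushFacts

section SwitchFacts

variable {t c : Placement lam} {i k : Fin n}

theorem switch_between (ht : IsGreedy t) (hs : SwitchMove t c i k) :
    ∀ w, t.col k < w → w < t.col i → ∃ q : Fin n, q < i ∧ t.col q = w := by
  obtain ⟨hik, hlt, hrect, _, _, _⟩ := hs
  intro w hw1 hw2
  have hw0 : 1 ≤ w := by have := t.pos k; omega
  have hwk : w ≤ lam.part k := le_trans (le_of_lt hw2)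
    (le_trans (t.le_part i) (lam.mono (le_of_lt hik)))
  obtain ⟨q, hq1, hq2⟩ := greedy_used ht k hw0 hwk (by omega)
  refine ⟨q, ?_, hq2⟩
  by_contra hqi
  have hiq : i ≤ q := le_of_not_gt hqi
  rcases hrect q hiq (le_of_lt hq1) (by rw [hq2]; exact le_of_lt hw1)
      (by rw [hq2]; exact le_of_lt hw2) with h | h
  · subst h; rw [hq2] at hw2; exact absurd hw2 (lt_irrefl _)
  · subst h; exact absurd hq1 (lt_irrefl _)

theorem switch_H (hs : SwitchMove t c i k) : (freeCols t i).Nonempty := by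
  obtain ⟨hik, hlt, _, _, _, _⟩ := hs
  refine ⟨t.col k, mem_freeCols.mpr ⟨t.pos k, hlt, ?_⟩⟩
  intro q hq h
  have : q = k := t.inj h
  subst this
  exact absurd (lt_trans hq hik) (lt_irrefl _)

theorem switch_g (ht : IsGreedy t) (hs : SwitchMove t c i k) (H : (freeCols t i).Nonempty) :
    (freeCols t i).max' H = t.col k := by
  obtain ⟨hik, hlt, hrect, _, _, _⟩ := hs
  apply le_antisymm
  · by_contra hgt
    push_neg at hgt
    obtain ⟨q, hq1, hq2⟩ := switch_between ht ⟨hik, hlt, hrect, ‹_›, ‹_›, ‹_›⟩ _ hgt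
      (gfree_lt t i H)
    exact gfree_unused t i H q hq1 hq2
  · apply gfree_max t i H (t.pos k) hlt
    intro q hq h
    have : q = k := t.inj h
    subst this
    exact absurd (lt_trans hq hik) (lt_irrefl _)

theorem switch_spade (ht : IsGreedy t) (hs : SwitchMove t c i k) :
    ∀ r : Fin n, i < r → r < k → t.col i < t.col r := by
  have h := hs
  obtain ⟨hik, hlt, hrect, _, _, _⟩ := h
  exact spade_switch ht hik hlt (switch_between ht hs)

theorem switch_comp (hs : SwitchMove t c i k) :
    ∀ r : Fin n, c.col r = t.col (Equiv.swap i k r) := by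
  obtain ⟨hik, hlt, _, h4, h5, h6⟩ := hs
  intro r
  rcases eq_or_ne r i with rfl | e1
  · rw [Equiv.swap_apply_left, h4]
  rcases eq_or_ne r k with rfl | e2
  · rw [Equiv.swap_apply_right, h5]
  · rw [Equiv.swap_apply_of_ne_of_ne e1 e2, h6 r e1 e2]

theorem switch_dmove_eq (ht : IsGreedy t) (hs : SwitchMove t c i k)
    (H : (freeCols t i).Nonempty) : dmove t i H = c := by
  have hg := switch_g ht hs H
  obtain ⟨hik, hlt, hrect, h4, h5, h6⟩ := hs
  rcases dmove_cases t i H with ⟨hempty, _, _⟩ | ⟨k', hik', hkg', hdj, hdk, hdo⟩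
  · exfalso
    exact hempty k (by rw [hg])
  · have hkk : k' = k := t.inj (by rw [hkg', hg])
    subst hkk
    apply Placement.ext'
    funext r
    by_cases hri : r = i
    · rw [hri, hdj, hg, h4]
    by_cases hrk : r = k'
    · rw [hrk, hdk, h5]
    · rw [hdo r hri hrk, h6 r hri hrk]

end SwitchFacts

theorem mem_Xset_iff {t c z : Placement lam} :
    z ∈ Xset t {c} ↔ ∀ c' : Placement lam, rcovers c' t → c' ≠ c → ¬ rle z c' := by
  unfold Xset
  simp only [Set.mem_setOf_eq, Set.mem_singleton_iff]

theorem xset_firstdiff_core {t : Placement lam} (ht : IsGreedy t) {i : Fin n} {c : Placement lam}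
    (hlow : ∀ r : Fin n, r < i → c.col r = t.col r) (hci : c.col i ≠ t.col i)
    (hC : ∀ H : (freeCols t i).Nonempty, dmove t i H = c)
    {z : Placement lam} (hz : z ∈ Xset t {c}) (hzt : z ≠ t) :
    (∀ r : Fin n, r < i → z.col r = t.col r) ∧ z.col i ≠ t.col i := by
  rw [mem_Xset_iff] at hz
  obtain ⟨j₀, hne₀, hagree₀⟩ := firstdiff_exists z hzt
  have H₀ : (freeCols t j₀).Nonempty := ⟨z.col j₀, firstdiff_free ht z j₀ hagree₀ hne₀⟩
  have hzd : rle z (dmove t j₀ H₀) := rle_dmove_of_firstdiff ht z j₀ H₀ hagree₀ hne₀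
  have hdc : dmove t j₀ H₀ = c := by
    by_contra hne
    exact hz (dmove t j₀ H₀) (dmove_coatom ht j₀ H₀) hne hzd
  have hj₀ : j₀ = i := by
    rcases lt_trichotomy j₀ i with h | h | h
    · exfalso
      have h1 := dmove_col_j t j₀ H₀
      have h2 := gfree_lt t j₀ H₀
      have h3 := hlow j₀ h
      rw [hdc] at h1
      omega
    · exact h
    · exfalso
      have h1 := dmove_agree_below t j₀ H₀ i h
      rw [hdc] at h1
      exact hci h1
  subst hj₀
  exact ⟨hagree₀, hne₀⟩

section PushMain

variable {t c : Placement lam} {i : Fin n}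

theorem xset_push_eq (ht : IsGreedy t) (hp : PushMove t c i) :
    Xset t {c} = rowVar t i '' ↑(Ucols t i) := by
  have hsp := push_spade ht hp
  have hcl := push_ci_lt hp
  obtain ⟨c₀, hp1, hp2, hp3, hp4, hp5, hp6⟩ := push_data hp
  have hci : c.col i ≠ t.col i := by omega
  have hlow : ∀ r : Fin n, r < i → c.col r = t.col r := fun r hr => hp6 r (ne_of_lt hr)
  apply Set.Subset.antisymm
  · -- ⊆
    intro z hz
    by_cases hzt : z = t
    · exact ⟨t.col i, Finset.mem_coe.mpr (col_mem_Ucols t i), by rw [rowVar_self]; exact hzt.symm⟩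
    obtain ⟨hagree, hne⟩ := xset_firstdiff_core ht hlow hci (push_dmove_eq hp) hz hzt
    rw [mem_Xset_iff] at hz
    have hzi_lt : z.col i < t.col i := firstdiff_lt ht z i hagree hne
    have habove : ∀ r : Fin n, i < r → z.col r = t.col r := by
      by_contra hex
      push_neg at hex
      obtain ⟨w, hw1, hw2⟩ := hex
      have hDne : (Finset.univ.filter fun r : Fin n => i < r ∧ z.col r ≠ t.col r).Nonempty :=
        ⟨w, Finset.mem_filter.mpr ⟨Finset.mem_univ _, hw1, hw2⟩⟩
      obtain ⟨j₁, hj₁S, hj₁min⟩ := Finset.exists_min_image _ (fun r : Fin n => (r : ℕ)) hDne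
      rw [Finset.mem_filter] at hj₁S
      obtain ⟨-, hij₁, hnej₁⟩ := hj₁S
      have hmin : ∀ r : Fin n, i < r → r < j₁ → z.col r = t.col r := by
        intro r h1 h2
        by_contra h3
        have := hj₁min r (Finset.mem_filter.mpr ⟨Finset.mem_univ _, h1, h3⟩)
        rw [Fin.lt_def] at h2
        omega
      have hagg : ∀ r : Fin n, r < j₁ → r ≠ i → z.col r = t.col r := by
        intro r h1 h2
        rcases lt_trichotomy r i with h | h | h
        · exact hagree r h
        · exact absurd h h2
        · exact hmin r h h1
      have hspj := hsp j₁ hij₁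
      have hlt₁ : z.col j₁ < t.col j₁ := by
        rcases Nat.lt_or_ge (z.col j₁) (t.col j₁) with h | h
        · exact h
        have hgt : t.col j₁ < z.col j₁ := by omega
        exfalso
        obtain ⟨q, hq, hq2⟩ := greedy_used ht j₁ (z.pos j₁) (z.le_part j₁) hgt
        have hqi : q ≠ i := by
          intro hh
          subst hh
          omega
        have : z.col q = z.col j₁ := by rw [hagg q hq hqi, hq2]
        have := z.inj this
        subst this
        exact absurd hq (lt_irrefl _)
      have hfree₁ : z.col i ∈ freeCols t j₁ := by
        rw [mem_freeCols]
        refine ⟨z.pos i, by omega, ?_⟩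
        intro q hq h
        have hqi : q ≠ i := by
          intro hh; subst hh; omega
        have : z.col q = z.col i := by rw [hagg q hq hqi, h]
        exact hqi (z.inj this)
      have H₁ : (freeCols t j₁).Nonempty := ⟨z.col i, hfree₁⟩
      have hvig : z.col i ≤ (freeCols t j₁).max' H₁ := (freeCols t j₁).le_max' _ hfree₁
      have HW : ∀ m, (freeCols t j₁).max' H₁ < m → m ≤ t.col j₁ →
          cnt z.col ((j₁ : ℕ) + 1) m ≤ cnt t.col (j₁ : ℕ) m := by
        intro m hm1 hm2
        apply cnt_le_map₂ (Equiv.swap i j₁)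
        intro r hr hmr
        by_cases hri : r = i
        · exfalso
          rw [hri] at hmr
          omega
        by_cases hrj : r = j₁
        · have hzj : z.col j₁ = t.col i := by
            by_contra hzj
            have hfr : z.col j₁ ∈ freeCols t j₁ := by
              rw [mem_freeCols]
              refine ⟨z.pos j₁, hlt₁, ?_⟩
              intro q hq h
              have hqi : q ≠ i := by
                intro hh; rw [hh] at h; exact hzj h.symm
              have : z.col q = z.col j₁ := by rw [hagg q hq hqi, h]
              have := z.inj this
              subst this
              exact absurd hq (lt_irrefl _)
            have := (freeCols t j₁).le_max' _ hfr
            rw [hrj] at hmr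
            omega
          rw [hrj] at hmr
          rw [hrj, Equiv.swap_apply_right]
          refine ⟨by rw [Fin.lt_def] at hij₁; omega, by rw [← hzj]; exact hmr⟩
        · rw [Equiv.swap_apply_of_ne_of_ne hri hrj]
          have hrlt : (r : ℕ) < (j₁ : ℕ) := by
            have : (r : ℕ) ≠ (j₁ : ℕ) := fun h => hrj (Fin.ext h)
            omega
          refine ⟨hrlt, ?_⟩
          rw [← hagg r (Fin.lt_def.mpr hrlt) hri]
          exact hmr
      have hzd₁ : rle z (dmove t j₁ H₁) := rle_dmove ht j₁ H₁ z HW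
      have hne_c : dmove t j₁ H₁ ≠ c := by
        intro h
        have h2 := dmove_agree_below t j₁ H₁ i hij₁
        rw [h] at h2
        omega
      exact hz _ (dmove_coatom ht j₁ H₁) hne_c hzd₁
    have hmemU : z.col i ∈ Ucols t i := by
      rw [mem_Ucols]
      refine ⟨z.pos i, z.le_part i, ?_⟩
      intro r hr h
      rcases lt_trichotomy r i with hlt | heq | hgt
      · have : z.col r = z.col i := by rw [hagree r hlt, h]
        exact hr (z.inj this)
      · exact hr heq
      · have := hsp r hgt
        omega
    refine ⟨z.col i, Finset.mem_coe.mpr hmemU, ?_⟩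
    apply Placement.ext'
    funext r
    obtain ⟨hv1, hv2⟩ := rowVar_col hmemU
    by_cases hr : r = i
    · rw [hr, hv1]
    · rw [hv2 r hr]
      rcases lt_trichotomy r i with hlt | heq | hgt
      · exact (hagree r hlt).symm
      · exact absurd heq hr
      · exact (habove r hgt).symm
  · -- ⊇
    rintro w ⟨v, hvU, rfl⟩
    rw [Finset.mem_coe] at hvU
    rw [mem_Xset_iff]
    intro c' hcov hnotc
    obtain ⟨j', H', hc'eq, hnej', _⟩ := coatom_eq_dmove ht hcov
    subst hc'eq
    have hj'i : j' ≠ i := by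
      intro h
      subst h
      exact hnotc (push_dmove_eq hp H')
    apply not_rle_dmove j' H'
    apply cnt_congr
    intro r hr
    by_cases hri : r = i
    · rw [hri, (rowVar_col hvU).1]
      rw [hri] at hr
      by_cases hv : v = t.col i
      · rw [hv]
      · have hvlt : v < t.col i := by
          rcases Nat.lt_or_ge v (t.col i) with h | h
          · exact h
          exfalso
          have hvgt : t.col i < v := by omega
          obtain ⟨hv1, hv2, hv3⟩ := mem_Ucols.mp hvU
          obtain ⟨q, hq, hq2⟩ := greedy_used ht i hv1 hv2 hvgt
          exact hv3 q (ne_of_lt hq) hq2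
        have hij' : i < j' := by
          rw [Fin.lt_def]
          have : (i : ℕ) ≠ (j' : ℕ) := fun h => hj'i (Fin.ext h).symm
          omega
        have := hsp j' hij'
        constructor <;> intro <;> omega
    · rw [(rowVar_col hvU).2 r hri]

theorem rowVar_injOn (t : Placement lam) (i : Fin n) :
    Set.InjOn (rowVar t i) ↑(Ucols t i) := by
  intro a ha b hb h
  rw [Finset.mem_coe] at ha hb
  have h1 := (rowVar_col ha).1
  have h2 := (rowVar_col hb).1
  rw [← h1, ← h2, h]

theorem rowVar_mono (t : Placement lam) (i : Fin n) {u v : ℕ} (hu : u ∈ Ucols t i)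
    (hv : v ∈ Ucols t i) (huv : u ≤ v) : rle (rowVar t i u) (rowVar t i v) := by
  rw [rle_iff_cnt]
  intro J m
  apply cnt_le_of_imp
  intro r hr hm
  by_cases hri : r = i
  · rw [hri, (rowVar_col hv).1]
    rw [hri, (rowVar_col hu).1] at hm
    omega
  · rw [(rowVar_col hv).2 r hri]
    rw [(rowVar_col hu).2 r hri] at hm
    exact hm

theorem card_fin_lt_filter (i : Fin n) :
    (Finset.univ.filter fun r : Fin n => (r : ℕ) < (i : ℕ)).card = (i : ℕ) := by
  have key : (Finset.univ.filter fun r : Fin n => (r : ℕ) < (i : ℕ)).card =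
      (Finset.range (i : ℕ)).card := by
    apply Finset.card_bij (fun (r : Fin n) _ => (r : ℕ))
    · intro r hr
      simp only [Finset.mem_filter, Finset.mem_univ, true_and] at hr
      exact Finset.mem_range.mpr hr
    · intro a ha b hb hab
      exact Fin.ext hab
    · intro a ha
      rw [Finset.mem_range] at ha
      have han : a < n := lt_trans ha i.isLt
      refine ⟨⟨a, han⟩, ?_, rfl⟩
      simp only [Finset.mem_filter, Finset.mem_univ, true_and]
      exact ha
  rw [key, Finset.card_range]

theorem card_Ucols (ht : IsGreedy t) (i : Fin n) (hsp : ∀ r : Fin n, i < r → t.col i < t.col r) :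
    (Ucols t i).card + (i : ℕ) = lam.part i := by
  classical
  have hpart := Finset.card_filter_add_card_filter_not
    (s := Finset.Icc 1 (lam.part i)) (p := fun v => ∀ r : Fin n, r ≠ i → t.col r ≠ v)
  have hIcc : (Finset.Icc 1 (lam.part i)).card = lam.part i := by
    rw [Nat.card_Icc]
    omega
  have hneg : ((Finset.Icc 1 (lam.part i)).filter fun v =>
      ¬ ∀ r : Fin n, r ≠ i → t.col r ≠ v).card = (i : ℕ) := by
    rw [← card_fin_lt_filter i]
    symm
    apply Finset.card_bij (fun r _ => t.col r)
    · intro r hr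
      simp only [Finset.mem_filter, Finset.mem_univ, true_and] at hr
      have hri : r ≠ i := by intro h; subst h; omega
      have hrFin : r < i := Fin.lt_def.mpr hr
      simp only [Finset.mem_filter, Finset.mem_Icc]
      refine ⟨⟨t.pos r, le_trans (t.le_part r) (lam.mono (le_of_lt hrFin))⟩, ?_⟩
      push_neg
      exact ⟨r, hri, rfl⟩
    · intro a _ b _ hab
      exact t.inj hab
    · intro v hv
      simp only [Finset.mem_filter, Finset.mem_Icc] at hv
      obtain ⟨⟨hv1, hv2⟩, hv3⟩ := hv
      push_neg at hv3
      obtain ⟨q, hq1, hq2⟩ := hv3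
      have hqi : q < i := by
        rcases lt_trichotomy q i with h | h | h
        · exact h
        · exact absurd h hq1
        · exfalso
          have h1 := hsp q h
          obtain ⟨q', hq', hq'2⟩ := greedy_used ht i hv1 hv2 (by omega)
          have : q' = q := t.inj (by rw [hq'2, hq2])
          subst this
          exact absurd (lt_trans hq' h) (lt_irrefl _)
      refine ⟨q, ?_, hq2⟩
      simp only [Finset.mem_filter, Finset.mem_univ, true_and]
      exact Fin.lt_def.mp hqi
  have hU : (Ucols t i).card =
      ((Finset.Icc 1 (lam.part i)).filter fun v => ∀ r : Fin n, r ≠ i → t.col r ≠ v).card := by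
    rfl
  omega

end PushMain

section SwitchMain

variable {t c : Placement lam} {i k : Fin n}

theorem xset_switch_eq (ht : IsGreedy t) (hs : SwitchMove t c i k) :
    Xset t {c} = {t, c} := by
  have hsp := switch_spade ht hs
  have hcomp := switch_comp hs
  have hC : ∀ H : (freeCols t i).Nonempty, dmove t i H = c := switch_dmove_eq ht hs
  have hgf : ∀ H : (freeCols t i).Nonempty, (freeCols t i).max' H = t.col k := switch_g ht hs
  obtain ⟨hik, hlt, hrect, h4, h5, h6⟩ := hs
  have hikv : (i : ℕ) < (k : ℕ) := Fin.lt_def.mp hik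
  have hci : c.col i ≠ t.col i := by omega
  have hlow : ∀ r : Fin n, r < i → c.col r = t.col r := fun r hr =>
    h6 r (ne_of_lt hr) (ne_of_lt (lt_trans hr hik))
  apply Set.Subset.antisymm
  · intro z hz
    by_cases hzt : z = t
    · exact Or.inl hzt
    obtain ⟨hagree, hne⟩ := xset_firstdiff_core ht hlow hci hC hz hzt
    rw [mem_Xset_iff] at hz
    have hzi_lt : z.col i < t.col i := firstdiff_lt ht z i hagree hne
    have hfree_i : z.col i ∈ freeCols t i := firstdiff_free ht z i hagree hne
    have Hi : (freeCols t i).Nonempty := ⟨_, hfree_i⟩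
    have hzik : z.col i ≤ t.col k := by
      have h1 := (freeCols t i).le_max' _ hfree_i
      rw [hgf Hi] at h1
      exact h1
    -- Step 1 : the rook of row i of z sits at column t.col k
    have hzi : z.col i = t.col k := by
      by_contra hzine
      have hzilt : z.col i < t.col k := by omega
      have hfree_k : z.col i ∈ freeCols t k := by
        rw [mem_freeCols]
        refine ⟨z.pos i, hzilt, ?_⟩
        intro q hq h
        rcases lt_trichotomy q i with hq1 | hq1 | hq1
        · have hq2 : z.col q = z.col i := by rw [hagree q hq1, h]
          exact absurd (z.inj hq2) (ne_of_lt hq1)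
        · subst hq1; omega
        · have := hsp q hq1 hq; omega
      have Hk : (freeCols t k).Nonempty := ⟨_, hfree_k⟩
      have HW : ∀ m, (freeCols t k).max' Hk < m → m ≤ t.col k →
          cnt z.col ((k : ℕ) + 1) m ≤ cnt t.col (k : ℕ) m := by
        intro m hm1 hm2
        have hzg : z.col i ≤ (freeCols t k).max' Hk := (freeCols t k).le_max' _ hfree_k
        apply cnt_le_map₂ (Equiv.swap i k)
        intro r hr hmr
        by_cases hri : r = i
        · exfalso; rw [hri] at hmr; omega
        by_cases hrk : r = k
        · rw [hrk, Equiv.swap_apply_right]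
          exact ⟨hikv, by omega⟩
        · rw [Equiv.swap_apply_of_ne_of_ne hri hrk]
          have hrlt : (r : ℕ) < (k : ℕ) := by
            have : (r : ℕ) ≠ (k : ℕ) := fun h => hrk (Fin.ext h)
            omega
          refine ⟨hrlt, ?_⟩
          rcases lt_trichotomy r i with hq1 | hq1 | hq1
          · rw [← hagree r hq1]; exact hmr
          · exact absurd hq1 hri
          · have := hsp r hq1 (Fin.lt_def.mpr hrlt); omega
      have hzd := rle_dmove ht k Hk z HW
      have hnec : dmove t k Hk ≠ c := by
        intro h
        have h2 := dmove_agree_below t k Hk i hik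
        rw [h] at h2
        omega
      exact hz _ (dmove_coatom ht k Hk) hnec hzd
    -- Step 2 : all rows above i agree with c
    have habove : ∀ r : Fin n, i < r → z.col r = c.col r := by
      by_contra hex
      push_neg at hex
      obtain ⟨w, hw1, hw2⟩ := hex
      have hDne : (Finset.univ.filter fun r : Fin n => i < r ∧ z.col r ≠ c.col r).Nonempty :=
        ⟨w, Finset.mem_filter.mpr ⟨Finset.mem_univ _, hw1, hw2⟩⟩
      obtain ⟨j₁, hj₁S, hj₁min⟩ := Finset.exists_min_image _ (fun r : Fin n => (r : ℕ)) hDne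
      rw [Finset.mem_filter] at hj₁S
      obtain ⟨-, hij₁, hnej₁⟩ := hj₁S
      have hmin : ∀ r : Fin n, i < r → r < j₁ → z.col r = c.col r := by
        intro r h1 h2
        by_contra h3
        have := hj₁min r (Finset.mem_filter.mpr ⟨Finset.mem_univ _, h1, h3⟩)
        rw [Fin.lt_def] at h2
        omega
      have hagg : ∀ r : Fin n, r < j₁ → z.col r = c.col r := by
        intro r h1
        rcases lt_trichotomy r i with h | h | h
        · rw [hagree r h, hlow r h]
        · subst h; rw [hzi, h4]
        · exact hmin r h h1
      have hzsw : ∀ r : Fin n, r < j₁ → z.col r = t.col (Equiv.swap i k r) := fun r hr =>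
        (hagg r hr).trans (hcomp r)
      rcases lt_trichotomy j₁ k with hc1 | hc1 | hc1
      · -- i < j₁ < k
        have hcj : c.col j₁ = t.col j₁ := h6 j₁ (ne_of_gt hij₁) (ne_of_lt hc1)
        have hnet : z.col j₁ ≠ t.col j₁ := by rw [← hcj]; exact hnej₁
        have hspj := hsp j₁ hij₁ hc1
        have hlt₁ : z.col j₁ < t.col j₁ := by
          rcases Nat.lt_or_ge (z.col j₁) (t.col j₁) with h | h
          · exact h
          exfalso
          obtain ⟨q, hq, hq2⟩ := greedy_used ht j₁ (z.pos j₁) (z.le_part j₁) (by omega)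
          have hqi : q ≠ i := by intro hh; subst hh; omega
          have hqk : q ≠ k := ne_of_lt (lt_trans hq hc1)
          have hq3 : z.col q = z.col j₁ := by rw [hagg q hq, h6 q hqi hqk, hq2]
          have := z.inj hq3
          subst this
          exact absurd hq (lt_irrefl _)
        have hfree₁ : t.col k ∈ freeCols t j₁ := by
          rw [mem_freeCols]
          refine ⟨t.pos k, by omega, ?_⟩
          intro q hq h
          have := t.inj h
          subst this
          exact absurd (lt_trans hq hc1) (lt_irrefl _)
        have H₁ : (freeCols t j₁).Nonempty := ⟨_, hfree₁⟩
        have htkg : t.col k ≤ (freeCols t j₁).max' H₁ := (freeCols t j₁).le_max' _ hfree₁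
        have HW : ∀ m, (freeCols t j₁).max' H₁ < m → m ≤ t.col j₁ →
            cnt z.col ((j₁ : ℕ) + 1) m ≤ cnt t.col (j₁ : ℕ) m := by
          intro m hm1 hm2
          apply cnt_le_map₂ (Equiv.swap i j₁)
          intro r hr hmr
          by_cases hri : r = i
          · exfalso
            rw [hri, hzi] at hmr
            omega
          by_cases hrj : r = j₁
          · have hzj : z.col j₁ = t.col i := by
              by_contra hzj
              have hfr : z.col j₁ ∈ freeCols t j₁ := by
                rw [mem_freeCols]
                refine ⟨z.pos j₁, hlt₁, ?_⟩
                intro q hq h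
                have hqi : q ≠ i := by intro hh; rw [hh] at h; exact hzj h.symm
                have hqk : q ≠ k := ne_of_lt (lt_trans hq hc1)
                have hq3 : z.col q = z.col j₁ := by rw [hagg q hq, h6 q hqi hqk, h]
                have := z.inj hq3
                subst this
                exact absurd hq (lt_irrefl _)
              have := (freeCols t j₁).le_max' _ hfr
              rw [hrj] at hmr
              omega
            rw [hrj] at hmr
            rw [hrj, Equiv.swap_apply_right]
            exact ⟨Fin.lt_def.mp hij₁, by rw [← hzj]; exact hmr⟩
          · rw [Equiv.swap_apply_of_ne_of_ne hri hrj]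
            have hrlt : (r : ℕ) < (j₁ : ℕ) := by
              have : (r : ℕ) ≠ (j₁ : ℕ) := fun h => hrj (Fin.ext h)
              omega
            have hrkne : r ≠ k := fun h => by
              rw [h] at hrlt
              rw [Fin.lt_def] at hc1
              omega
            refine ⟨hrlt, ?_⟩
            rw [← h6 r hri hrkne, ← hagg r (Fin.lt_def.mpr hrlt)]
            exact hmr
        have hzd := rle_dmove ht j₁ H₁ z HW
        have hnec : dmove t j₁ H₁ ≠ c := by
          intro h
          have h2 := dmove_agree_below t j₁ H₁ i hij₁
          rw [h] at h2
          omega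
        exact hz _ (dmove_coatom ht j₁ H₁) hnec hzd
      · -- j₁ = k
        subst hc1
        have hnet : z.col j₁ ≠ t.col i := by rw [← h5]; exact hnej₁
        have hnetk : z.col j₁ ≠ t.col j₁ := by
          intro h
          have : z.col j₁ = z.col i := by rw [h, ← hzi]
          have := z.inj this
          subst this
          exact absurd hij₁ (lt_irrefl _)
        have hlt₁ : z.col j₁ < t.col j₁ := by
          rcases Nat.lt_or_ge (z.col j₁) (t.col j₁) with h | h
          · exact h
          exfalso
          obtain ⟨q, hq, hq2⟩ := greedy_used ht j₁ (z.pos j₁) (z.le_part j₁) (by omega)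
          have hqi : q ≠ i := by
            intro hh; subst hh
            exact hnet hq2.symm
          have hq3 : z.col q = z.col j₁ := by
            rw [hagg q hq, h6 q hqi (ne_of_lt hq), hq2]
          have := z.inj hq3
          subst this
          exact absurd hq (lt_irrefl _)
        have hfree₁ : z.col j₁ ∈ freeCols t j₁ := by
          rw [mem_freeCols]
          refine ⟨z.pos j₁, hlt₁, ?_⟩
          intro q hq h
          have hqi : q ≠ i := by
            intro hh; subst hh
            omega
          have hq3 : z.col q = z.col j₁ := by
            rw [hagg q hq, h6 q hqi (ne_of_lt hq), h]
          have := z.inj hq3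
          subst this
          exact absurd hq (lt_irrefl _)
        have H₁ : (freeCols t j₁).Nonempty := ⟨_, hfree₁⟩
        have hzg : z.col j₁ ≤ (freeCols t j₁).max' H₁ := (freeCols t j₁).le_max' _ hfree₁
        have HW : ∀ m, (freeCols t j₁).max' H₁ < m → m ≤ t.col j₁ →
            cnt z.col ((j₁ : ℕ) + 1) m ≤ cnt t.col (j₁ : ℕ) m := by
          intro m hm1 hm2
          apply cnt_le_map₂ (Equiv.refl (Fin n))
          intro r hr hmr
          simp only [Equiv.refl_apply]
          by_cases hrj : r = j₁
          · exfalso; rw [hrj] at hmr; omega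
          have hrlt : (r : ℕ) < (j₁ : ℕ) := by
            have : (r : ℕ) ≠ (j₁ : ℕ) := fun h => hrj (Fin.ext h)
            omega
          refine ⟨hrlt, ?_⟩
          by_cases hri : r = i
          · rw [hri]
            rw [hri, hzi] at hmr
            omega
          · rw [← h6 r hri hrj, ← hagg r (Fin.lt_def.mpr hrlt)]
            exact hmr
        have hzd := rle_dmove ht j₁ H₁ z HW
        have hnec : dmove t j₁ H₁ ≠ c := by
          intro h
          have h2 := dmove_agree_below t j₁ H₁ i hij₁
          rw [h] at h2
          omega
        exact hz _ (dmove_coatom ht j₁ H₁) hnec hzd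
      · -- k < j₁
        have hcj : c.col j₁ = t.col j₁ := h6 j₁ (ne_of_gt hij₁) (ne_of_gt hc1)
        have hnet : z.col j₁ ≠ t.col j₁ := by rw [← hcj]; exact hnej₁
        have hswlt : ∀ q : Fin n, q < j₁ → Equiv.swap i k q < j₁ := by
          intro q hq
          rcases eq_or_ne q i with rfl | e1
          · rw [Equiv.swap_apply_left]; exact hc1
          rcases eq_or_ne q k with rfl | e2
          · rw [Equiv.swap_apply_right]; exact lt_trans hik hc1
          · rw [Equiv.swap_apply_of_ne_of_ne e1 e2]; exact hq
        have hclash : ∀ q : Fin n, q < j₁ → t.col q ≠ z.col j₁ := by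
          intro q hq h
          have hq' : Equiv.swap i k q < j₁ := hswlt q hq
          have : z.col (Equiv.swap i k q) = z.col j₁ := by
            rw [hzsw _ hq', Equiv.swap_apply_self, h]
          have := z.inj this
          rw [this] at hq'
          exact absurd hq' (lt_irrefl _)
        have hlt₁ : z.col j₁ < t.col j₁ := by
          rcases Nat.lt_or_ge (z.col j₁) (t.col j₁) with h | h
          · exact h
          exfalso
          obtain ⟨q, hq, hq2⟩ := greedy_used ht j₁ (z.pos j₁) (z.le_part j₁) (by omega)
          exact hclash q hq hq2
        have hfree₁ : z.col j₁ ∈ freeCols t j₁ :=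
          mem_freeCols.mpr ⟨z.pos j₁, hlt₁, fun q hq h => hclash q hq h⟩
        have H₁ : (freeCols t j₁).Nonempty := ⟨_, hfree₁⟩
        have hzg : z.col j₁ ≤ (freeCols t j₁).max' H₁ := (freeCols t j₁).le_max' _ hfree₁
        have HW : ∀ m, (freeCols t j₁).max' H₁ < m → m ≤ t.col j₁ →
            cnt z.col ((j₁ : ℕ) + 1) m ≤ cnt t.col (j₁ : ℕ) m := by
          intro m hm1 hm2
          apply cnt_le_map₂ (Equiv.swap i k)
          intro r hr hmr
          by_cases hrj : r = j₁
          · exfalso; rw [hrj] at hmr; omega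
          have hrlt : (r : ℕ) < (j₁ : ℕ) := by
            have : (r : ℕ) ≠ (j₁ : ℕ) := fun h => hrj (Fin.ext h)
            omega
          have hrF : r < j₁ := Fin.lt_def.mpr hrlt
          refine ⟨Fin.lt_def.mp (hswlt r hrF), ?_⟩
          rw [← hzsw r hrF]
          exact hmr
        have hzd := rle_dmove ht j₁ H₁ z HW
        have hnec : dmove t j₁ H₁ ≠ c := by
          intro h
          have h2 := dmove_agree_below t j₁ H₁ i hij₁
          rw [h] at h2
          omega
        exact hz _ (dmove_coatom ht j₁ H₁) hnec hzd
    right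
    apply Placement.ext'
    funext r
    rcases lt_trichotomy r i with h | h | h
    · rw [hagree r h, hlow r h]
    · subst h; rw [hzi, h4]
    · exact habove r h
  · -- {t, c} ⊆ Xset
    intro w hw
    rcases hw with rfl | hw
    · rw [mem_Xset_iff]
      intro c' hcov hnotc hrle
      exact hcov.2.1 (rle_antisymm hcov.1 hrle)
    · rw [Set.mem_singleton_iff] at hw
      subst hw
      rw [mem_Xset_iff]
      intro c' hcov hnotc
      obtain ⟨j', H', heq, _, _⟩ := coatom_eq_dmove ht hcov
      subst heq
      have hj'i : j' ≠ i := by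
        intro h
        subst h
        exact hnotc (hC H')
      apply not_rle_dmove j' H'
      by_cases hkJ : (k : ℕ) < (j' : ℕ) + 1
      · exact cnt_swap_eq hcomp (by omega) hkJ
      · apply cnt_congr
        intro r hr
        have hrk : r ≠ k := by
          intro h
          rw [h] at hr
          omega
        by_cases hri : r = i
        · rw [hri, h4]
          rw [hri] at hr
          have hij' : i < j' := by
            rw [Fin.lt_def]
            have : (i : ℕ) ≠ (j' : ℕ) := fun h => hj'i (Fin.ext h).symm
            omega
          have hj'k : j' < k := by rw [Fin.lt_def]; omega
          have := hsp j' hij' hj'k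
          constructor <;> intro <;> omega
        · rw [h6 r hri hrk]

end SwitchMain

theorem Xset_singleton_chain' {n : ℕ} (lam : Partition n) (t : Placement lam)
    (ht : IsGreedy t) (i : Fin n) (c : Placement lam) (hc : MoveOnRow t c i) :
    (∀ x ∈ Xset t {c}, ∀ y ∈ Xset t {c}, rle x y ∨ rle y x) ∧
    ((∃ k : Fin n, SwitchMove t c i k) → (Xset t {c}).ncard = 2) ∧
    (PushMove t c i → (Xset t {c}).ncard = lam.part i - (i : ℕ)) := by
  refine ⟨?_, ?_, ?_⟩
  · rcases hc with ⟨k, hs⟩ | hp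
    · intro x hx y hy
      rw [xset_switch_eq ht hs] at hx hy
      rcases hx with rfl | hx <;> rcases hy with rfl | hy
      · left; exact rle_refl' _
      · rw [Set.mem_singleton_iff] at hy; subst hy; right; exact rle_top ht _
      · rw [Set.mem_singleton_iff] at hx; subst hx; left; exact rle_top ht _
      · rw [Set.mem_singleton_iff] at hx hy; subst hx; subst hy; left; exact rle_refl' _
    · intro x hx y hy
      rw [xset_push_eq ht hp] at hx hy
      obtain ⟨u, hu, rfl⟩ := hx
      obtain ⟨v, hv, rfl⟩ := hy
      rw [Finset.mem_coe] at hu hv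
      rcases le_total u v with h | h
      · left; exact rowVar_mono t i hu hv h
      · right; exact rowVar_mono t i hv hu h
  · rintro ⟨k, hs⟩
    rw [xset_switch_eq ht hs]
    apply Set.ncard_pair
    intro h
    have h4 := hs.2.2.2.1
    have hlt := hs.2.1
    have h5 : t.col i = c.col i := by rw [h]
    omega
  · intro hp
    rw [xset_push_eq ht hp]
    rw [Set.ncard_image_of_injOn (rowVar_injOn t i)]
    rw [Set.ncard_coe_finset]
    have h1 := card_Ucols ht i (push_spade ht hp)
    omega


/-- For the coatom `c` of row `i`, the set `X_{{c}}` of elements below no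
other coatom is totally ordered; it has exactly `2` elements if `c` is a switch move and
exactly `λ_i - i + 1` elements if `c` is a push move. -/
theorem Xset_singleton_chain {n : ℕ} (lam : Partition n) (t : Placement lam)
    (ht : IsGreedy t) (i : Fin n) (c : Placement lam) (hc : MoveOnRow t c i) :
    (∀ x ∈ Xset t {c}, ∀ y ∈ Xset t {c}, rle x y ∨ rle y x) ∧
    ((∃ k : Fin n, SwitchMove t c i k) → (Xset t {c}).ncard = 2) ∧
    (PushMove t c i → (Xset t {c}).ncard = lam.part i - (i : ℕ)) :=
  Xset_singleton_chain' lam t ht i c hc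

end RookPoset
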